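/- arXiv:1502.07796 — 5 statements merged into one kernel-verified Lean document; each statement's English description precedes it below -/
import Mathlib

section
/- Let R be a commutative ring. For finite rooted directed acyclic multigraphs G₁ and G₂ whose marked root vertices are sources, and for a vertex v ∈ V(G₁), let G₁ ⊲_v G₂ denote the rooted directed acyclic multigraph obtained from the disjoint union of G₁ and G₂ by identifying the root of G₂ with the vertex v, with root the root of G₁. Then on the free R-module spanned by isomorphism classes of finite rooted directed acyclic multigraphs with source root, the operator G₁ ⊲ G₂ := Σ_{v ∈ V(G₁)} [G₁ ⊲_v G₂], extended bilinearly, is well defined and satisfies the right pre-Lie identity. -/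
open scoped Classical

noncomputable section

/-- A finite rooted directed multigraph: finite vertex and edge types together with
source and target maps, and a marked root vertex. -/
structure RootedMultigraph : Type 1 where
  V : Type
  E : Type
  [fintV : Fintype V]
  [fintE : Fintype E]
  src : E → V
  tgt : E → V
  root : V

attribute [instance] RootedMultigraph.fintV RootedMultigraph.fintE

namespace RootedMultigraph

/-- A graph is acyclic if it contains no directed cycle. -/
def Acyclic (G : RootedMultigraph) : Prop :=
  ¬ ∃ (n : ℕ) (e : Fin (n + 1) → G.E), ∀ i, G.tgt (e i) = G.src (e (i + 1))

/-- The root vertex is a source: no edge has it as target. -/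
def RootIsSource (G : RootedMultigraph) : Prop := ∀ e : G.E, G.tgt e ≠ G.root

/-- A rooted directed acyclic multigraph with source root. -/
def Good (G : RootedMultigraph) : Prop := G.Acyclic ∧ G.RootIsSource

/-- `G₁ ⊲_v G₂`: the graph obtained from the disjoint union of `G₁` and `G₂` by
identifying the root of `G₂` with the vertex `v` of `G₁`, rooted at the root of `G₁`. -/
def glue (G₁ : RootedMultigraph) (v : G₁.V) (G₂ : RootedMultigraph) : RootedMultigraph where
  V := G₁.V ⊕ {w : G₂.V // w ≠ G₂.root}
  E := G₁.E ⊕ G₂.E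
  src := Sum.elim (fun e => Sum.inl (G₁.src e))
    (fun e => if h : G₂.src e = G₂.root then Sum.inl v else Sum.inr ⟨G₂.src e, h⟩)
  tgt := Sum.elim (fun e => Sum.inl (G₁.tgt e))
    (fun e => if h : G₂.tgt e = G₂.root then Sum.inl v else Sum.inr ⟨G₂.tgt e, h⟩)
  root := Sum.inl G₁.root

/-- Isomorphism of rooted multigraphs. -/
def Iso (G G' : RootedMultigraph) : Prop :=
  ∃ (eV : G.V ≃ G'.V) (eE : G.E ≃ G'.E),
    (∀ e, eV (G.src e) = G'.src (eE e)) ∧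
    (∀ e, eV (G.tgt e) = G'.tgt (eE e)) ∧ eV G.root = G'.root


open Fin.NatCast Fin.CommRing in
lemma glue_good {G₁ G₂ : RootedMultigraph} (h₁ : G₁.Good) (h₂ : G₂.Good) (v : G₁.V) :
    (G₁.glue v G₂).Good := by
  constructor
  · rintro ⟨n, e, he⟩
    by_cases hall : ∀ i, (e i).isLeft
    · choose f hf using fun i => Sum.isLeft_iff.mp (hall i)
      apply h₁.1
      refine ⟨n, f, fun i => ?_⟩
      have h := he i
      rw [hf i, hf (i+1)] at h
      simpa [glue] using h
    · push_neg at hall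
      obtain ⟨i₀, hi₀⟩ := hall
      have hi₀ : (e i₀).isRight := Sum.not_isLeft.mp hi₀
      have step : ∀ i, (e i).isRight → (e (i+1)).isRight := by
        intro i hi
        obtain ⟨f, hf⟩ := Sum.isRight_iff.mp hi
        have h := he i
        rw [hf] at h
        simp only [glue, Sum.elim_inr, dif_neg (h₂.2 f)] at h
        cases hg : e (i+1) with
        | inl g => rw [hg] at h; simp [glue] at h
        | inr g => simp
      have hall' : ∀ i, (e i).isRight := by
        have key : ∀ k : ℕ, (e (i₀ + (k : Fin (n+1)))).isRight := by
          intro k; induction k with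
          | zero => simpa using hi₀
          | succ k ih =>
            have hk : (i₀ + ((k+1 : ℕ) : Fin (n+1))) = (i₀ + (k : ℕ)) + 1 := by
              push_cast; ring
            rw [hk]; exact step _ ih
        intro j
        have hj : i₀ + (((j - i₀ : Fin (n+1)).val : ℕ) : Fin (n+1)) = j := by
          rw [Fin.cast_val_eq_self]; ring
        rw [← hj]; exact key _
      choose f hf using fun i => Sum.isRight_iff.mp (hall' i)
      apply h₂.1
      refine ⟨n, f, fun i => ?_⟩
      have h := he i
      rw [hf i, hf (i+1)] at h
      simp only [glue, Sum.elim_inr, dif_neg (h₂.2 (f i))] at h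
      by_cases hs : G₂.src (f (i+1)) = G₂.root
      · rw [dif_pos hs] at h; exact absurd h (by simp)
      · rw [dif_neg hs] at h; simpa using h
  · rintro (e|e) h
    · exact h₁.2 e (by simpa [glue] using h)
    · simp only [glue, Sum.elim_inr] at h
      split_ifs at h with ht
      exact h₂.2 e ht

lemma iso_refl (G : RootedMultigraph) : G.Iso G :=
  ⟨Equiv.refl _, Equiv.refl _, fun _ => rfl, fun _ => rfl, rfl⟩

lemma glue_iso_left {G₁ G₁' : RootedMultigraph} (h : G₁.Iso G₁') (G₂ : RootedMultigraph) :
    ∃ eV : G₁.V ≃ G₁'.V, ∀ v, (G₁.glue v G₂).Iso (G₁'.glue (eV v) G₂) := by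
  obtain ⟨eV, eE, hs, ht, hr⟩ := h
  refine ⟨eV, fun v => ⟨Equiv.sumCongr eV (Equiv.refl _), Equiv.sumCongr eE (Equiv.refl _),
    ?_, ?_, ?_⟩⟩
  · rintro (e|e)
    · erw [Equiv.sumCongr_apply, Equiv.sumCongr_apply]
      simp [glue, hs]
    · erw [Equiv.sumCongr_apply, Equiv.sumCongr_apply]
      simp only [glue, Equiv.sumCongr_apply, Equiv.coe_refl, Sum.map_map, id_eq, Function.comp_apply, Function.comp_def, id,
        Sum.map_inr, Sum.elim_inr]
      split_ifs with h <;> simp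
  · rintro (e|e)
    · erw [Equiv.sumCongr_apply, Equiv.sumCongr_apply]
      simp [glue, ht]
    · erw [Equiv.sumCongr_apply, Equiv.sumCongr_apply]
      simp only [glue, Equiv.sumCongr_apply, Equiv.coe_refl, Sum.map_map, id_eq, Function.comp_apply, Function.comp_def, id,
        Sum.map_inr, Sum.elim_inr]
      split_ifs with h <;> simp
  · erw [Equiv.sumCongr_apply]
    simpa [glue] using hr

lemma glue_iso_right {G₁ G₂ G₂' : RootedMultigraph} (h : G₂.Iso G₂') (v : G₁.V) :
    (G₁.glue v G₂).Iso (G₁.glue v G₂') := by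
  obtain ⟨eV, eE, hs, ht, hr⟩ := h
  have hne : ∀ w : G₂.V, w ≠ G₂.root ↔ eV w ≠ G₂'.root := by
    intro w
    rw [← hr]
    exact not_congr (Equiv.apply_eq_iff_eq eV).symm
  refine ⟨Equiv.sumCongr (Equiv.refl _) (eV.subtypeEquiv hne), Equiv.sumCongr (Equiv.refl _) eE,
    ?_, ?_, rfl⟩
  · rintro (e|e)
    · erw [Equiv.sumCongr_apply, Equiv.sumCongr_apply]
      simp [glue]
    · erw [Equiv.sumCongr_apply, Equiv.sumCongr_apply]
      simp only [glue, Equiv.sumCongr_apply, Sum.map_inr, Sum.elim_inr]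
      by_cases hc : G₂.src e = G₂.root
      · rw [dif_pos hc, dif_pos (show G₂'.src (eE e) = G₂'.root by rw [← hs, hc, hr])]
        simp
      · rw [dif_neg hc, dif_neg (show ¬ G₂'.src (eE e) = G₂'.root from
          fun hcon => hc (eV.injective (by rw [hs, hcon, hr])))]
        simp [Equiv.subtypeEquiv, hs]
  · rintro (e|e)
    · erw [Equiv.sumCongr_apply, Equiv.sumCongr_apply]
      simp [glue]
    · erw [Equiv.sumCongr_apply, Equiv.sumCongr_apply]
      simp only [glue, Equiv.sumCongr_apply, Sum.map_inr, Sum.elim_inr]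
      by_cases hc : G₂.tgt e = G₂.root
      · rw [dif_pos hc, dif_pos (show G₂'.tgt (eE e) = G₂'.root by rw [← ht, hc, hr])]
        simp
      · rw [dif_neg hc, dif_neg (show ¬ G₂'.tgt (eE e) = G₂'.root from
          fun hcon => hc (eV.injective (by rw [ht, hcon, hr])))]
        simp [Equiv.subtypeEquiv, ht]

section structural
variable (G₁ G₂ G₃ : RootedMultigraph)

/-- Gluing `G₂` at `v` and `G₃` at `w` (both in `G₁`) can be done in either order. -/
lemma iso_sym (v w : G₁.V) :
    ((G₁.glue v G₂).glue (Sum.inl w) G₃).Iso ((G₁.glue w G₃).glue (Sum.inl v) G₂) := by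
  refine ⟨⟨fun x => match x with
      | Sum.inl (Sum.inl x) => Sum.inl (Sum.inl x)
      | Sum.inl (Sum.inr y) => Sum.inr y
      | Sum.inr z => Sum.inl (Sum.inr z),
    fun x => match x with
      | Sum.inl (Sum.inl x) => Sum.inl (Sum.inl x)
      | Sum.inl (Sum.inr z) => Sum.inr z
      | Sum.inr y => Sum.inl (Sum.inr y),
    by rintro ((x|y)|z) <;> rfl, by rintro ((x|z)|y) <;> rfl⟩,
    ⟨fun x => match x with
      | Sum.inl (Sum.inl x) => Sum.inl (Sum.inl x)
      | Sum.inl (Sum.inr y) => Sum.inr y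
      | Sum.inr z => Sum.inl (Sum.inr z),
    fun x => match x with
      | Sum.inl (Sum.inl x) => Sum.inl (Sum.inl x)
      | Sum.inl (Sum.inr z) => Sum.inr z
      | Sum.inr y => Sum.inl (Sum.inr y),
    by rintro ((x|y)|z) <;> rfl, by rintro ((x|z)|y) <;> rfl⟩,
    ?_, ?_, rfl⟩ <;>
  · rintro ((e|e)|e) <;>
    first
      | rfl
      | (dsimp only [glue, Equiv.coe_fn_mk, DFunLike.coe, EquivLike.coe, Sum.elim_inl, Sum.elim_inr]
         split_ifs <;> rfl)

/-- Gluing `G₃` at a non-root vertex coming from `G₂`. -/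
lemma iso_assoc (v : G₁.V) (w : G₂.V) (hw : w ≠ G₂.root) :
    ((G₁.glue v G₂).glue (Sum.inr ⟨w, hw⟩) G₃).Iso (G₁.glue v (G₂.glue w G₃)) := by
  refine ⟨⟨fun x => match x with
      | Sum.inl (Sum.inl x) => Sum.inl x
      | Sum.inl (Sum.inr y) => Sum.inr ⟨Sum.inl y.1, by simp [glue, y.2]⟩
      | Sum.inr z => Sum.inr ⟨Sum.inr z, by simp [glue]⟩,
    fun x => match x with
      | Sum.inl x => Sum.inl (Sum.inl x)
      | Sum.inr ⟨Sum.inl y, h⟩ => Sum.inl (Sum.inr ⟨y, by simpa [glue] using h⟩)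
      | Sum.inr ⟨Sum.inr z, _⟩ => Sum.inr z,
    by rintro ((x|⟨y,hy⟩)|z) <;> rfl, by rintro (x|⟨(y|z),h⟩) <;> rfl⟩,
    Equiv.sumAssoc _ _ _, ?_, ?_, rfl⟩ <;>
  · rintro ((e|e)|e) <;>
      dsimp only [glue, Equiv.coe_fn_mk, DFunLike.coe, EquivLike.coe, Equiv.sumAssoc, Sum.elim_inl, Sum.elim_inr] <;>
      split_ifs <;> simp_all

/-- Gluing `G₃` at the vertex of `G₁ ⊲_v G₂` coming from the root of `G₂` (i.e. `v`). -/
lemma iso_root (v : G₁.V) :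
    ((G₁.glue v G₂).glue (Sum.inl v) G₃).Iso (G₁.glue v (G₂.glue G₂.root G₃)) := by
  refine ⟨⟨fun x => match x with
      | Sum.inl (Sum.inl x) => Sum.inl x
      | Sum.inl (Sum.inr y) => Sum.inr ⟨Sum.inl y.1, by simp [glue, y.2]⟩
      | Sum.inr z => Sum.inr ⟨Sum.inr z, by simp [glue]⟩,
    fun x => match x with
      | Sum.inl x => Sum.inl (Sum.inl x)
      | Sum.inr ⟨Sum.inl y, h⟩ => Sum.inl (Sum.inr ⟨y, by simpa [glue] using h⟩)
      | Sum.inr ⟨Sum.inr z, _⟩ => Sum.inr z,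
    by rintro ((x|⟨y,hy⟩)|z) <;> rfl, by rintro (x|⟨(y|z),h⟩) <;> rfl⟩,
    Equiv.sumAssoc _ _ _, ?_, ?_, rfl⟩ <;>
  · rintro ((e|e)|e) <;>
      dsimp only [glue, Equiv.coe_fn_mk, DFunLike.coe, EquivLike.coe, Equiv.sumAssoc, Sum.elim_inl, Sum.elim_inr] <;>
      split_ifs <;> simp_all

end structural

lemma sum_glueV {M : Type*} [AddCommMonoid M] (G₁ G₂ : RootedMultigraph) (v : G₁.V)
    (f : (G₁.glue v G₂).V → M) :
    ∑ u, f u = ∑ x : G₁.V, f (Sum.inl x) + ∑ y : {w : G₂.V // w ≠ G₂.root}, f (Sum.inr y) :=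
  Fintype.sum_sum_type f

lemma sum_split_root {M : Type*} [AddCommMonoid M] (G₂ : RootedMultigraph) (f : G₂.V → M) :
    ∑ w, f w = f G₂.root + ∑ w : {w : G₂.V // w ≠ G₂.root}, f w.1 := by
  rw [← Finset.add_sum_erase _ f (Finset.mem_univ G₂.root)]
  congr 1
  rw [Finset.sum_subtype (p := fun x => x ≠ G₂.root) (Finset.univ.erase G₂.root) (by simp) f]

end RootedMultigraph

/-- Finite rooted directed acyclic multigraphs with source root. -/
abbrev RootedDAG := {G : RootedMultigraph // G.Good}

def dagIsoRel : RootedDAG → RootedDAG → Prop := fun G G' => G.1.Iso G'.1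

/-- Isomorphism classes of finite rooted directed acyclic multigraphs with source root. -/
abbrev DAGClass := Quot dagIsoRel

namespace PreLieAux

open RootedMultigraph

variable (R : Type) [CommRing R]

def cls (G : RootedMultigraph) (h : G.Good) : DAGClass →₀ R :=
  Finsupp.single (Quot.mk dagIsoRel ⟨G, h⟩) 1

lemma cls_congr {G G' : RootedMultigraph} (h : G.Good) (h' : G'.Good) (hi : G.Iso G') :
    cls R G h = cls R G' h' := by
  unfold cls
  congr 1
  exact Quot.sound hi

def sgl (G : RootedDAG) : DAGClass →₀ R := Finsupp.single (Quot.mk dagIsoRel G) 1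

def m₀ (G₁ G₂ : RootedDAG) : DAGClass →₀ R :=
  ∑ v : G₁.1.V, cls R (G₁.1.glue v G₂.1) (glue_good G₁.2 G₂.2 v)

lemma m₀_congr_left {G₁ G₁' : RootedDAG} (G₂ : RootedDAG) (h : dagIsoRel G₁ G₁') :
    m₀ R G₁ G₂ = m₀ R G₁' G₂ := by
  obtain ⟨eV, hiso⟩ := glue_iso_left h G₂.1
  unfold m₀
  rw [← Equiv.sum_comp eV (fun v => cls R (G₁'.1.glue v G₂.1) (glue_good G₁'.2 G₂.2 v))]
  exact Finset.sum_congr rfl fun v _ => cls_congr R _ _ (hiso v)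

lemma m₀_congr_right (G₁ : RootedDAG) {G₂ G₂' : RootedDAG} (h : dagIsoRel G₂ G₂') :
    m₀ R G₁ G₂ = m₀ R G₁ G₂' :=
  Finset.sum_congr rfl fun v _ => cls_congr R _ _ (glue_iso_right h v)

def m : DAGClass → DAGClass → (DAGClass →₀ R) :=
  Quot.lift (fun G₁ => Quot.lift (m₀ R G₁) (fun _ _ h => m₀_congr_right R G₁ h))
    (fun _ _ h => funext fun q => by
      induction q using Quot.ind with
      | _ G₂ => exact m₀_congr_left R G₂ h)

def ins : (DAGClass →₀ R) →ₗ[R] (DAGClass →₀ R) →ₗ[R] (DAGClass →₀ R) :=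
  Finsupp.lsum R fun a => LinearMap.toSpanSingleton R _
    (Finsupp.lsum R fun b => LinearMap.toSpanSingleton R _ (m R a b))

lemma ins_single (G₁ G₂ : RootedDAG) :
    ins R (sgl R G₁) (sgl R G₂) = m₀ R G₁ G₂ := by
  simp [ins, sgl, Finsupp.lsum_single, LinearMap.toSpanSingleton_apply, m]

lemma expand1 (G₁ G₂ G₃ : RootedDAG) :
    ins R (ins R (sgl R G₁) (sgl R G₂)) (sgl R G₃)
      = ∑ v : G₁.1.V, ∑ u : (G₁.1.glue v G₂.1).V,
          cls R ((G₁.1.glue v G₂.1).glue u G₃.1)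
            (glue_good (glue_good G₁.2 G₂.2 v) G₃.2 u) := by
  rw [ins_single]
  unfold m₀
  rw [map_sum, LinearMap.sum_apply]
  exact Finset.sum_congr rfl fun v _ =>
    ins_single R ⟨G₁.1.glue v G₂.1, glue_good G₁.2 G₂.2 v⟩ G₃

lemma expand2 (G₁ G₂ G₃ : RootedDAG) :
    ins R (sgl R G₁) (ins R (sgl R G₂) (sgl R G₃))
      = ∑ w : G₂.1.V, ∑ v : G₁.1.V,
          cls R (G₁.1.glue v (G₂.1.glue w G₃.1))
            (glue_good G₁.2 (glue_good G₂.2 G₃.2 w) v) := by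
  rw [ins_single R G₂ G₃]
  unfold m₀
  rw [map_sum]
  exact Finset.sum_congr rfl fun w _ =>
    ins_single R G₁ ⟨G₂.1.glue w G₃.1, glue_good G₂.2 G₃.2 w⟩

lemma key (G₁ G₂ G₃ : RootedDAG) :
    ins R (ins R (sgl R G₁) (sgl R G₂)) (sgl R G₃)
      - ins R (sgl R G₁) (ins R (sgl R G₂) (sgl R G₃))
    = (∑ v : G₁.1.V, ∑ w : G₁.1.V,
        cls R ((G₁.1.glue v G₂.1).glue (Sum.inl w) G₃.1)
          (glue_good (glue_good G₁.2 G₂.2 v) G₃.2 (Sum.inl w)))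
      - ∑ v : G₁.1.V,
        cls R ((G₁.1.glue v G₂.1).glue (Sum.inl v) G₃.1)
          (glue_good (glue_good G₁.2 G₂.2 v) G₃.2 (Sum.inl v)) := by
  rw [expand1, expand2]
  have h1 : ∀ v : G₁.1.V,
      ∑ u : (G₁.1.glue v G₂.1).V,
        cls R ((G₁.1.glue v G₂.1).glue u G₃.1)
          (glue_good (glue_good G₁.2 G₂.2 v) G₃.2 u)
      = (∑ w : G₁.1.V,
          cls R ((G₁.1.glue v G₂.1).glue (Sum.inl w) G₃.1)
            (glue_good (glue_good G₁.2 G₂.2 v) G₃.2 (Sum.inl w)))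
        + ∑ y : {w : G₂.1.V // w ≠ G₂.1.root},
            cls R (G₁.1.glue v (G₂.1.glue y.1 G₃.1))
              (glue_good G₁.2 (glue_good G₂.2 G₃.2 y.1) v) := by
    intro v
    rw [sum_glueV]
    congr 1
    exact Finset.sum_congr rfl fun y _ =>
      cls_congr R _ _ (iso_assoc G₁.1 G₂.1 G₃.1 v y.1 y.2)
  have h2 :
      ∑ w : G₂.1.V, ∑ v : G₁.1.V,
        cls R (G₁.1.glue v (G₂.1.glue w G₃.1))
          (glue_good G₁.2 (glue_good G₂.2 G₃.2 w) v)
      = (∑ v : G₁.1.V,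
          cls R ((G₁.1.glue v G₂.1).glue (Sum.inl v) G₃.1)
            (glue_good (glue_good G₁.2 G₂.2 v) G₃.2 (Sum.inl v)))
        + ∑ y : {w : G₂.1.V // w ≠ G₂.1.root}, ∑ v : G₁.1.V,
            cls R (G₁.1.glue v (G₂.1.glue y.1 G₃.1))
              (glue_good G₁.2 (glue_good G₂.2 G₃.2 y.1) v) := by
    rw [sum_split_root]
    congr 1
    exact Finset.sum_congr rfl fun v _ =>
      (cls_congr R _ _ (iso_root G₁.1 G₂.1 G₃.1 v)).symm
  simp only [h1, h2, Finset.sum_add_distrib]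
  rw [Finset.sum_comm (f := fun v (y : {w : G₂.1.V // w ≠ G₂.1.root}) =>
    cls R (G₁.1.glue v (G₂.1.glue y.1 G₃.1))
      (glue_good G₁.2 (glue_good G₂.2 G₃.2 y.1) v))]
  abel



lemma preLie_single (G₁ G₂ G₃ : RootedDAG) :
    ins R (ins R (sgl R G₁) (sgl R G₂)) (sgl R G₃)
      - ins R (sgl R G₁) (ins R (sgl R G₂) (sgl R G₃))
    = ins R (ins R (sgl R G₁) (sgl R G₃)) (sgl R G₂)
      - ins R (sgl R G₁) (ins R (sgl R G₃) (sgl R G₂)) := by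
  rw [key, key]
  have hsym : ∀ v w : G₁.1.V,
      cls R ((G₁.1.glue v G₂.1).glue (Sum.inl w) G₃.1)
        (glue_good (glue_good G₁.2 G₂.2 v) G₃.2 (Sum.inl w))
      = cls R ((G₁.1.glue w G₃.1).glue (Sum.inl v) G₂.1)
        (glue_good (glue_good G₁.2 G₃.2 w) G₂.2 (Sum.inl v)) :=
    fun v w => cls_congr R _ _ (iso_sym G₁.1 G₂.1 G₃.1 v w)
  congr 1
  · rw [Finset.sum_comm]
    exact Finset.sum_congr rfl fun w _ => Finset.sum_congr rfl fun v _ => hsym v w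
  · exact Finset.sum_congr rfl fun v _ => hsym v v



lemma aux1 (G₁ G₂ G₃ : RootedDAG) :
    ins R (ins R (sgl R G₁) (sgl R G₂)) (sgl R G₃)
        - ins R (sgl R G₁) (ins R (sgl R G₂) (sgl R G₃))
      - (ins R (ins R (sgl R G₁) (sgl R G₃)) (sgl R G₂)
        - ins R (sgl R G₁) (ins R (sgl R G₃) (sgl R G₂))) = 0 :=
  sub_eq_zero.mpr (preLie_single R G₁ G₂ G₃)

lemma aux2 (G₁ G₂ : RootedDAG) (z : DAGClass →₀ R) :
    ins R (ins R (sgl R G₁) (sgl R G₂)) z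
        - ins R (sgl R G₁) (ins R (sgl R G₂) z)
      - (ins R (ins R (sgl R G₁) z) (sgl R G₂)
        - ins R (sgl R G₁) (ins R z (sgl R G₂))) = 0 := by
  induction z using Finsupp.induction_linear with
  | zero => simp
  | add f g hf hg =>
    simp only [map_add, LinearMap.add_apply]
    rw [sub_eq_zero] at hf hg ⊢
    rw [← sub_add_sub_comm, ← sub_add_sub_comm, hf, hg]
  | single a r =>
    induction a using Quot.ind with
    | _ G₃ =>
      have ha : Finsupp.single (Quot.mk dagIsoRel G₃) r
          = r • Finsupp.single (Quot.mk dagIsoRel G₃) (1 : R) := by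
        rw [Finsupp.smul_single', mul_one]
      rw [ha]
      simp only [map_smul, LinearMap.smul_apply, ← smul_sub]
      rw [show ins R (ins R (sgl R G₁) (sgl R G₂)) (Finsupp.single (Quot.mk dagIsoRel G₃) 1)
            - ins R (sgl R G₁) (ins R (sgl R G₂) (Finsupp.single (Quot.mk dagIsoRel G₃) 1))
          - (ins R (ins R (sgl R G₁) (Finsupp.single (Quot.mk dagIsoRel G₃) 1)) (sgl R G₂)
            - ins R (sgl R G₁) (ins R (Finsupp.single (Quot.mk dagIsoRel G₃) 1) (sgl R G₂)))
          = 0 from aux1 R G₁ G₂ G₃, smul_zero]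

lemma aux3 (G₁ : RootedDAG) (y z : DAGClass →₀ R) :
    ins R (ins R (sgl R G₁) y) z
        - ins R (sgl R G₁) (ins R y z)
      - (ins R (ins R (sgl R G₁) z) y
        - ins R (sgl R G₁) (ins R z y)) = 0 := by
  induction y using Finsupp.induction_linear with
  | zero => simp
  | add f g hf hg =>
    simp only [map_add, LinearMap.add_apply]
    rw [sub_eq_zero] at hf hg ⊢
    rw [← sub_add_sub_comm, ← sub_add_sub_comm, hf, hg]
  | single a r =>
    induction a using Quot.ind with
    | _ G₂ =>
      have ha : Finsupp.single (Quot.mk dagIsoRel G₂) r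
          = r • Finsupp.single (Quot.mk dagIsoRel G₂) (1 : R) := by
        rw [Finsupp.smul_single', mul_one]
      rw [ha]
      simp only [map_smul, LinearMap.smul_apply, ← smul_sub]
      rw [show ins R (ins R (sgl R G₁) (Finsupp.single (Quot.mk dagIsoRel G₂) 1)) z
            - ins R (sgl R G₁) (ins R (Finsupp.single (Quot.mk dagIsoRel G₂) 1) z)
          - (ins R (ins R (sgl R G₁) z) (Finsupp.single (Quot.mk dagIsoRel G₂) 1)
            - ins R (sgl R G₁) (ins R z (Finsupp.single (Quot.mk dagIsoRel G₂) 1)))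
          = 0 from aux2 R G₁ G₂ z, smul_zero]

lemma aux4 (x y z : DAGClass →₀ R) :
    ins R (ins R x y) z - ins R x (ins R y z)
      - (ins R (ins R x z) y - ins R x (ins R z y)) = 0 := by
  induction x using Finsupp.induction_linear with
  | zero => simp
  | add f g hf hg =>
    simp only [map_add, LinearMap.add_apply]
    rw [sub_eq_zero] at hf hg ⊢
    rw [← sub_add_sub_comm, ← sub_add_sub_comm, hf, hg]
  | single a r =>
    induction a using Quot.ind with
    | _ G₁ =>
      have ha : Finsupp.single (Quot.mk dagIsoRel G₁) r
          = r • Finsupp.single (Quot.mk dagIsoRel G₁) (1 : R) := by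
        rw [Finsupp.smul_single', mul_one]
      rw [ha]
      simp only [map_smul, LinearMap.smul_apply, ← smul_sub]
      rw [show ins R (ins R (Finsupp.single (Quot.mk dagIsoRel G₁) 1) y) z
            - ins R (Finsupp.single (Quot.mk dagIsoRel G₁) 1) (ins R y z)
          - (ins R (ins R (Finsupp.single (Quot.mk dagIsoRel G₁) 1) z) y
            - ins R (Finsupp.single (Quot.mk dagIsoRel G₁) 1) (ins R z y))
          = 0 from aux3 R G₁ y z, smul_zero]

end PreLieAux

/-- The (right) pre-Lie identity for a bilinear map. -/
def IsPreLie {R M : Type*} [CommRing R] [AddCommGroup M] [Module R M]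
    (t : M →ₗ[R] M →ₗ[R] M) : Prop :=
  ∀ x y z : M, t (t x y) z - t x (t y z) = t (t x z) y - t x (t z y)

/-- on the free `R`-module spanned by isomorphism classes of finite rooted
directed acyclic multigraphs with source root, the bilinear operator
`G₁ ⊲ G₂ = Σ_{v ∈ V(G₁)} [G₁ ⊲_v G₂]` is well defined and satisfies the right pre-Lie
identity. -/
theorem insertion_of_rooted_dags_is_preLie (R : Type) [CommRing R] :
    ∃ ins : (DAGClass →₀ R) →ₗ[R] (DAGClass →₀ R) →ₗ[R] (DAGClass →₀ R),
      (∀ G₁ G₂ : RootedDAG,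
        ∃ h : ∀ v : G₁.1.V, (G₁.1.glue v G₂.1).Good,
          ins (Finsupp.single (Quot.mk dagIsoRel G₁) 1)
              (Finsupp.single (Quot.mk dagIsoRel G₂) 1)
            = ∑ v : G₁.1.V,
                Finsupp.single
                  (Quot.mk dagIsoRel (⟨G₁.1.glue v G₂.1, h v⟩ : RootedDAG)) (1 : R)) ∧
      IsPreLie ins := by
  refine ⟨PreLieAux.ins R, fun G₁ G₂ =>
    ⟨fun v => RootedMultigraph.glue_good G₁.2 G₂.2 v, PreLieAux.ins_single R G₁ G₂⟩,
    fun x y z => sub_eq_zero.mp (PreLieAux.aux4 R x y z)⟩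
end
end

section
/- Fix an integer k ≥ 3. Call a graph in the half-edge formalism a φ^k-graph if it is finite, connected, and every vertex has valence exactly k. Let L be the smallest set of isomorphism classes of graphs in the half-edge formalism such that: (i) the k-corolla (a single vertex with k external half-edges) belongs to L; (ii) if G ∈ L and f ≠ f' are two external half-edges of G, then the graph obtained from G by modifying the involution so that it exchanges f and f' (joining them into an internal edge) belongs to L; (iii) if G ∈ L and f is an external half-edge of G, then the graph obtained by taking the disjoint union of G with a k-corolla and joining f to one half-edge of the corolla belongs to L. Then L is exactly the set of isomorphism classes of φ^k-graphs. -/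
open scoped Classical

noncomputable section

/-- A finite graph in the half-edge formalism. -/
structure HalfEdgeGraph : Type 1 where
  V : Type
  F : Type
  [fintV : Fintype V]
  [fintF : Fintype F]
  att : F → V
  inv : F → F

attribute [instance] HalfEdgeGraph.fintV HalfEdgeGraph.fintF

namespace HalfEdgeGraph

/-- Isomorphism of half-edge graphs. -/
def Iso (G G' : HalfEdgeGraph) : Prop :=
  ∃ (eV : G.V ≃ G'.V) (eF : G.F ≃ G'.F),
    (∀ f, eV (G.att f) = G'.att (eF f)) ∧ (∀ f, eF (G.inv f) = G'.inv (eF f))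

/-- Adjacency through an internal edge. -/
def Adj (G : HalfEdgeGraph) (u v : G.V) : Prop :=
  ∃ f, G.inv f ≠ f ∧ G.att f = u ∧ G.att (G.inv f) = v

/-- Connectedness. -/
def Connected (G : HalfEdgeGraph) : Prop :=
  Nonempty G.V ∧ ∀ u v : G.V, Relation.ReflTransGen G.Adj u v

/-- The valence of a vertex: the number of half-edges attached to it. -/
def valence (G : HalfEdgeGraph) (v : G.V) : ℕ := Fintype.card {f : G.F // G.att f = v}

end HalfEdgeGraph

/-- The `k`-corolla: a single vertex with `k` external half-edges. -/
def corolla (k : ℕ) : HalfEdgeGraph where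
  V := PUnit
  F := Fin k
  att := fun _ => PUnit.unit
  inv := id

/-- Join two external half-edges `f ≠ f'` of `G` into an internal edge. -/
def joinExt (G : HalfEdgeGraph) (f f' : G.F) : HalfEdgeGraph where
  V := G.V
  F := G.F
  att := G.att
  inv := fun g => if g = f then f' else if g = f' then f else G.inv g

/-- Disjoint union of `G` with a `k`-corolla, joining the half-edge `f` of `G` to the
half-edge `i` of the corolla. -/
def attachCorolla (G : HalfEdgeGraph) (f : G.F) (k : ℕ) (i : Fin k) : HalfEdgeGraph where
  V := G.V ⊕ PUnit
  F := G.F ⊕ Fin k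
  att := Sum.elim (fun g => Sum.inl (G.att g)) (fun _ => Sum.inr PUnit.unit)
  inv := Sum.elim
    (fun g => if g = f then Sum.inr i else Sum.inl (G.inv g))
    (fun j => if j = i then Sum.inl f else Sum.inr j)

/-- The smallest (isomorphism-invariant) class of half-edge graphs containing the
`k`-corolla and closed under joining two external half-edges and under attaching a
fresh `k`-corolla along an external half-edge. -/
inductive InLang (k : ℕ) : HalfEdgeGraph → Prop
  | corolla : InLang k (corolla k)
  | join {G : HalfEdgeGraph} (hG : InLang k G) (f f' : G.F)
      (hf : G.inv f = f) (hf' : G.inv f' = f') (hne : f ≠ f') :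
      InLang k (joinExt G f f')
  | attach {G : HalfEdgeGraph} (hG : InLang k G) (f : G.F) (hf : G.inv f = f)
      (i : Fin k) : InLang k (attachCorolla G f k i)
  | iso {G G' : HalfEdgeGraph} (hG : InLang k G) (h : G.Iso G') : InLang k G'

/-- A `φ^k`-graph: a finite connected half-edge graph (with genuine involution) all of
whose vertices have valence exactly `k`. -/
def IsPhiKGraph (k : ℕ) (G : HalfEdgeGraph) : Prop :=
  Function.Involutive G.inv ∧ G.Connected ∧ ∀ v : G.V, G.valence v = k

namespace PhiKAux

open HalfEdgeGraph Relation

/-! ### Forward direction helpers -/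

lemma adj_symm {G : HalfEdgeGraph} (hinv : Function.Involutive G.inv) :
    Symmetric G.Adj := by
  rintro u v ⟨g, hg, h1, h2⟩
  exact ⟨G.inv g, by rw [hinv g]; exact fun h => hg h.symm, h2, by rw [hinv g]; exact h1⟩

lemma isPhiK_iso {k : ℕ} {G G' : HalfEdgeGraph} (h : G.Iso G') (hG : IsPhiKGraph k G) :
    IsPhiKGraph k G' := by
  obtain ⟨eV, eF, hatt, hinv⟩ := h
  obtain ⟨Hinv, ⟨Hne, Hconn⟩, Hval⟩ := hG
  have hinv' : ∀ x, G'.inv x = eF (G.inv (eF.symm x)) := by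
    intro x
    rw [hinv (eF.symm x), Equiv.apply_symm_apply]
  refine ⟨?_, ⟨⟨eV (Classical.choice Hne)⟩, ?_⟩, ?_⟩
  · intro x
    rw [hinv' x, hinv' (eF (G.inv (eF.symm x))), Equiv.symm_apply_apply, Hinv,
      Equiv.apply_symm_apply]
  · intro u v
    have := Hconn (eV.symm u) (eV.symm v)
    have hstep : ∀ a b, G.Adj a b → G'.Adj (eV a) (eV b) := by
      rintro a b ⟨g, hg, h1, h2⟩
      refine ⟨eF g, ?_, ?_, ?_⟩
      · rw [← hinv g]; exact fun h => hg (eF.injective h)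
      · rw [← hatt g, h1]
      · rw [← hinv g, ← hatt (G.inv g), h2]
    have := Relation.ReflTransGen.lift eV hstep _ _ this
    rwa [Function.onFun, Equiv.apply_symm_apply, Equiv.apply_symm_apply] at this
  · intro v
    have : G'.valence v = G.valence (eV.symm v) := by
      apply Fintype.card_congr
      refine ⟨fun g => ⟨eF.symm g.1, ?_⟩, fun g => ⟨eF g.1, ?_⟩, ?_, ?_⟩
      · have := hatt (eF.symm g.1); rw [Equiv.apply_symm_apply] at this
        rw [Equiv.eq_symm_apply, this, g.2]
      · rw [← hatt g.1, g.2, Equiv.apply_symm_apply]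
      · intro g; ext; simp
      · intro g; ext; simp
    rw [this, Hval]


lemma forward {k : ℕ} (hk : 3 ≤ k) {G : HalfEdgeGraph} (hG : InLang k G) :
    IsPhiKGraph k G := by
  induction hG with
  | corolla =>
    refine ⟨fun f => rfl, ⟨⟨PUnit.unit⟩, fun u v => ?_⟩, fun v => ?_⟩
    · cases u; cases v; exact Relation.ReflTransGen.refl
    · cases v
      calc Fintype.card {f : Fin k // (corolla k).att f = PUnit.unit}
          = Fintype.card (Fin k) := Fintype.card_congr (Equiv.subtypeUnivEquiv fun _ => rfl)
        _ = k := Fintype.card_fin k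
  | @join G hG f f' hf hf' hne ih =>
    obtain ⟨Hinv, ⟨Hne, Hconn⟩, Hval⟩ := ih
    have hJinv : ∀ g, (joinExt G f f').inv g =
        if g = f then f' else if g = f' then f else G.inv g := fun g => rfl
    refine ⟨?_, ⟨Hne, fun u v => ?_⟩, fun v => Hval v⟩
    · intro g
      rw [hJinv g]
      by_cases h1 : g = f
      · erw [if_pos h1, hJinv f', if_neg (Ne.symm hne), if_pos rfl, h1]
      · by_cases h2 : g = f'
        · erw [if_neg h1, if_pos h2, hJinv f, if_pos rfl, h2]
        · rw [if_neg h1, if_neg h2, hJinv (G.inv g)]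
          have n1 : G.inv g ≠ f := fun h => h1 (by rw [← Hinv g, h, hf])
          have n2 : G.inv g ≠ f' := fun h => h2 (by rw [← Hinv g, h, hf'])
          erw [if_neg n1, if_neg n2, Hinv]
    · refine Relation.ReflTransGen.mono ?_ _ _ (Hconn u v)
      rintro a b ⟨g, hg, h1, h2⟩
      have n1 : g ≠ f := fun h => hg (by rw [h, hf])
      have n2 : g ≠ f' := fun h => hg (by rw [h, hf'])
      refine ⟨g, ?_, h1, ?_⟩
      · erw [hJinv g, if_neg n1, if_neg n2]; exact hg
      · erw [hJinv g, if_neg n1, if_neg n2]; exact h2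
  | @attach G hG f hf i ih =>
    obtain ⟨Hinv, ⟨Hne, Hconn⟩, Hval⟩ := ih
    set A := attachCorolla G f k i with hA
    have hinvl : ∀ g : G.F, A.inv (Sum.inl g) =
        (if g = f then Sum.inr i else Sum.inl (G.inv g)) := fun g => rfl
    have hinvr : ∀ j : Fin k, A.inv (Sum.inr j) =
        (if j = i then Sum.inl f else Sum.inr j) := fun j => rfl
    have hattl : ∀ g : G.F, A.att (Sum.inl g) = Sum.inl (G.att g) := fun g => rfl
    have hattr : ∀ j : Fin k, A.att (Sum.inr j) = Sum.inr PUnit.unit := fun j => rfl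
    have hAinv : Function.Involutive A.inv := by
      rintro (g | j)
      · rw [hinvl]
        by_cases h1 : g = f
        · subst h1; rw [if_pos rfl, hinvr, if_pos rfl]
        · rw [if_neg h1, hinvl]
          have : G.inv g ≠ f := fun h => h1 (by rw [← Hinv g, h, hf])
          rw [if_neg this, Hinv]
      · rw [hinvr]
        by_cases h1 : j = i
        · subst h1; rw [if_pos rfl, hinvl, if_pos rfl]
        · rw [if_neg h1, hinvr, if_neg h1]
    have hbase : ∀ u : A.V, Relation.ReflTransGen A.Adj u (Sum.inr PUnit.unit) := by
      rintro (u | u)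
      · have step : ∀ a b, G.Adj a b → A.Adj (Sum.inl a) (Sum.inl b) := by
          rintro a b ⟨g, hg, h1, h2⟩
          have n1 : g ≠ f := fun h => hg (by rw [h, hf])
          refine ⟨Sum.inl g, ?_, ?_, ?_⟩
          · rw [hinvl, if_neg n1]; exact fun h => hg (Sum.inl.inj h)
          · rw [hattl, h1]
          · rw [hinvl, if_neg n1, hattl, h2]
        have p1 : Relation.ReflTransGen A.Adj (Sum.inl u) (Sum.inl (G.att f)) :=
          Relation.ReflTransGen.lift _ step _ _ (Hconn u (G.att f))
        refine p1.tail ⟨Sum.inl f, ?_, rfl, ?_⟩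
        · rw [hinvl, if_pos rfl]; exact fun h => by simpa using h
        · rw [hinvl, if_pos rfl, hattr]
      · cases u; exact Relation.ReflTransGen.refl
    refine ⟨hAinv, ⟨⟨Sum.inr PUnit.unit⟩, fun u v => ?_⟩, ?_⟩
    · exact (hbase u).trans ((@Relation.ReflTransGen.stdSymm _ _ ⟨fun a b h => adj_symm hAinv h⟩).symm _ _ (hbase v))
    · rintro (v | v)
      · have : A.valence (Sum.inl v) = G.valence v := by
          apply Fintype.card_congr
          refine Equiv.symm (Equiv.ofBijective (fun g => ⟨Sum.inl g.1, by
            rw [hattl, g.2]⟩) ⟨?_, ?_⟩)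
          · rintro ⟨g, hg⟩ ⟨g', hg'⟩ h
            exact Subtype.ext (Sum.inl.inj (Subtype.ext_iff.mp h))
          · rintro ⟨(g | j), hg⟩
            · exact ⟨⟨g, Sum.inl.inj hg⟩, rfl⟩
            · exact absurd hg (by simp [hattr])
        rw [this, Hval]
      · cases v
        have : A.valence (Sum.inr PUnit.unit) = Fintype.card (Fin k) := by
          apply Fintype.card_congr
          refine Equiv.symm (Equiv.ofBijective (fun j => ⟨Sum.inr j, rfl⟩) ⟨?_, ?_⟩)
          · intro j j' h
            exact Sum.inr.inj (Subtype.ext_iff.mp h)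
          · rintro ⟨(g | j), hg⟩
            · exact absurd hg (by simp [hattl])
            · exact ⟨j, rfl⟩
        rw [this, Fintype.card_fin]
  | iso hG h ih => exact isPhiK_iso h ih


/-! ### Backward direction -/

/-- Cut the internal edge `{f, G.inv f}`, making both half-edges external. -/
def cutE (G : HalfEdgeGraph) (f : G.F) : HalfEdgeGraph where
  V := G.V
  F := G.F
  att := G.att
  inv := fun g => if g = f ∨ g = G.inv f then g else G.inv g

section CutE

variable {G : HalfEdgeGraph} {f : G.F}

lemma cutE_inv (g : G.F) :
    (cutE G f).inv g = if g = f ∨ g = G.inv f then g else G.inv g := rfl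

lemma cutE_inv_fix_left : (cutE G f).inv f = f := by
  rw [cutE_inv, if_pos (Or.inl rfl)]

lemma cutE_inv_fix_right : (cutE G f).inv (G.inv f) = G.inv f := by
  rw [cutE_inv, if_pos (Or.inr rfl)]

lemma cutE_inv_ne (Hinv : Function.Involutive G.inv) {g : G.F}
    (h1 : g ≠ f) (h2 : g ≠ G.inv f) : (cutE G f).inv g = G.inv g := by
  rw [cutE_inv, if_neg (by tauto)]

lemma cutE_involutive (Hinv : Function.Involutive G.inv) :
    Function.Involutive (cutE G f).inv := by
  intro g
  show (cutE G f).inv ((cutE G f).inv g) = g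
  by_cases h : (g : G.F) = f ∨ (g : G.F) = G.inv f
  · erw [cutE_inv (G := G) (f := f) g, if_pos h, cutE_inv (G := G) (f := f) g, if_pos h]
  · rw [not_or] at h
    erw [cutE_inv_ne Hinv h.1 h.2, cutE_inv_ne Hinv ?_ ?_, Hinv]
    · intro hc; exact h.2 (by erw [← hc, Hinv])
    · intro hc; exact h.1 (Hinv.injective hc)

lemma cutE_adj_le {u v : G.V} (h : (cutE G f).Adj u v) : G.Adj u v := by
  obtain ⟨g, hg, h1, h2⟩ := h
  by_cases hc : (g : G.F) = f ∨ (g : G.F) = G.inv f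
  · erw [cutE_inv (G := G) (f := f) g, if_pos hc] at hg; exact absurd rfl hg
  · rw [not_or] at hc
    erw [cutE_inv (G := G) (f := f) g, if_neg (by tauto)] at hg h2
    exact ⟨g, hg, h1, h2⟩

lemma cutE_valence (v : G.V) : (cutE G f).valence v = G.valence v := rfl

end CutE

/-- A graph with no internal half-edges is in the language (it is a corolla). -/
lemma lang_of_no_internal {k : ℕ} {G : HalfEdgeGraph} (hG : IsPhiKGraph k G)
    (h0 : ∀ g : G.F, G.inv g = g) : InLang k G := by
  obtain ⟨Hinv, ⟨Hne, Hconn⟩, Hval⟩ := hG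
  have hallEq : ∀ u v : G.V, u = v := by
    intro u v
    induction Hconn u v with
    | refl => rfl
    | tail _ h ih =>
      obtain ⟨g, hg, _, _⟩ := h
      exact absurd (h0 g) hg
  obtain ⟨v0⟩ := Hne
  have hcard : Fintype.card G.F = k := by
    rw [← Hval v0]
    exact (Fintype.card_congr (Equiv.subtypeUnivEquiv fun g => hallEq _ _)).symm
  refine InLang.iso (InLang.corolla) ?_
  refine ⟨⟨fun _ => v0, fun _ => PUnit.unit, fun u => rfl, fun u => hallEq _ _⟩,
    (Fintype.equivFinOfCardEq hcard).symm, fun g => hallEq _ _, fun g => ?_⟩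
  exact (h0 _).symm


/-- Vertices reachable from `G.att (G.inv f)` after cutting the edge `{f, G.inv f}`. -/
def reach (G : HalfEdgeGraph) (f : G.F) : Set G.V :=
  {u | Relation.ReflTransGen (cutE G f).Adj (G.att (G.inv f)) u}

lemma bridge_not_mem {k : ℕ} {G : HalfEdgeGraph} {f : G.F} (hphi : IsPhiKGraph k G)
    (hf : G.inv f ≠ f) (hnc : ¬ (cutE G f).Connected) : G.att f ∉ reach G f := by
  obtain ⟨Hinv, ⟨Hne, Hconn⟩, _⟩ := hphi
  intro hmem
  apply hnc
  have hmem' : Relation.ReflTransGen (cutE G f).Adj (G.att (G.inv f)) (G.att f) := hmem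
  have hsymmCut : Symmetric (Relation.ReflTransGen (cutE G f).Adj) :=
    fun a b h => (@Relation.ReflTransGen.stdSymm _ _ ⟨fun a b h => adj_symm (cutE_involutive Hinv) h⟩).symm a b h
  refine ⟨Hne, fun u v => ?_⟩
  have hstep : ∀ a b : G.V, G.Adj a b →
      Relation.ReflTransGen (cutE G f).Adj a b := by
    rintro a b ⟨g, hg, h1, h2⟩
    by_cases hc1 : g = f
    · rw [← h1, ← h2, hc1]
      exact hsymmCut hmem'
    · by_cases hc2 : g = G.inv f
      · rw [← h1, ← h2, hc2, Hinv]
        exact hmem'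
      · refine Relation.ReflTransGen.single ⟨g, ?_, h1, ?_⟩
        · rw [cutE_inv_ne Hinv hc1 hc2]; exact hg
        · rw [cutE_inv_ne Hinv hc1 hc2]; exact h2
  induction Hconn u v with
  | refl => exact Relation.ReflTransGen.refl
  | tail _ h ih => exact ih.trans (hstep _ _ h)

/-- If every internal edge is a bridge (and there is one), there is a leaf vertex. -/
lemma exists_leaf {k : ℕ} {G : HalfEdgeGraph} (hphi : IsPhiKGraph k G)
    (hex : ∃ g : G.F, G.inv g ≠ g)
    (hall : ∀ g : G.F, G.inv g ≠ g → ¬ (cutE G g).Connected) :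
    ∃ f : G.F, G.inv f ≠ f ∧ G.att f ≠ G.att (G.inv f) ∧
      ∀ g : G.F, G.att g = G.att (G.inv f) → g ≠ G.inv f → G.inv g = g := by
  have Hinv := hphi.1
  obtain ⟨f, hfmem, hfmin⟩ := Finset.exists_min_image
    (Finset.univ.filter fun g : G.F => G.inv g ≠ g) (fun g => (reach G g).ncard)
    (by obtain ⟨g, hg⟩ := hex
        exact ⟨g, Finset.mem_filter.mpr ⟨Finset.mem_univ _, hg⟩⟩)
  have hf : G.inv f ≠ f := (Finset.mem_filter.mp hfmem).2
  have hAf : G.att f ∉ reach G f := bridge_not_mem hphi hf (hall f hf)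
  have hvmem : G.att (G.inv f) ∈ reach G f := Relation.ReflTransGen.refl
  refine ⟨f, hf, fun h => hAf (by rw [h]; exact hvmem), fun g hgv hgne => ?_⟩
  by_contra hgint
  have hAg : G.att g ∉ reach G g := bridge_not_mem hphi hgint (hall g hgint)
  have hgf : g ≠ f := by
    intro h
    exact hAf (by rw [show G.att f = G.att (G.inv f) from h ▸ hgv]; exact hvmem)
  have hsub : reach G g ⊆ reach G f := by
    intro u hu
    have hu' : Relation.ReflTransGen (cutE G g).Adj (G.att (G.inv g)) u := hu
    clear hu
    induction hu' with
    | refl =>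
      refine Relation.ReflTransGen.single ⟨g, ?_, hgv, ?_⟩
      · rw [cutE_inv_ne Hinv hgf hgne]; exact hgint
      · rw [cutE_inv_ne Hinv hgf hgne]; rfl
    | @tail x y p h ih =>
      obtain ⟨h', hne', ha1, ha2⟩ := h
      have hh1 : (h' : G.F) ≠ g := by
        intro hc; exact hne' (by rw [hc, cutE_inv_fix_left])
      have hh2 : (h' : G.F) ≠ G.inv g := by
        intro hc; exact hne' (by rw [hc, cutE_inv_fix_right])
      have hinvh : (cutE G g).inv h' = G.inv h' := cutE_inv_ne Hinv hh1 hh2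
      by_cases hc1 : (h' : G.F) = f
      · exact absurd ih (by rw [← ha1, hc1]; exact hAf)
      · by_cases hc2 : (h' : G.F) = G.inv f
        · have hx : x ∈ reach G g := p
          have hxv : x = G.att g := by rw [hgv, ← hc2]; exact ha1.symm
          exact absurd (hxv ▸ hx) hAg
        · refine ih.tail ⟨h', ?_, ha1, ?_⟩
          · rw [cutE_inv_ne Hinv hc1 hc2]
            rw [hinvh] at hne'; exact hne'
          · rw [cutE_inv_ne Hinv hc1 hc2, ← hinvh]; exact ha2
  have hne : reach G g ≠ reach G f := by
    intro he
    exact hAg (by rw [hgv, he]; exact hvmem)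
  have hlt : (reach G g).ncard < (reach G f).ncard :=
    Set.ncard_lt_ncard (Set.ssubset_iff_subset_ne.mpr ⟨hsub, hne⟩) (Set.toFinite _)
  have := hfmin g (Finset.mem_filter.mpr ⟨Finset.mem_univ _, hgint⟩)
  omega


/-- Delete a leaf vertex `v` together with all half-edges attached to it. -/
def deleteLeaf (G : HalfEdgeGraph) (v : G.V) : HalfEdgeGraph where
  V := {u : G.V // u ≠ v}
  F := {g : G.F // G.att g ≠ v}
  att := fun g => ⟨G.att g.1, g.2⟩
  inv := fun g => if h : G.att (G.inv g.1) = v then g else ⟨G.inv g.1, h⟩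

/-- Map a vertex of `G` to a vertex of `deleteLeaf G v`, sending `v` to a default. -/
def toDel (G : HalfEdgeGraph) (v : G.V) (w : {u : G.V // u ≠ v}) (u : G.V) :
    (deleteLeaf G v).V :=
  if h : u = v then w else ⟨u, h⟩

lemma toDel_v {G : HalfEdgeGraph} {v : G.V} (w : {u : G.V // u ≠ v}) :
    toDel G v w v = w := dif_pos rfl

lemma toDel_ne {G : HalfEdgeGraph} {v : G.V} (w : {u : G.V // u ≠ v}) {u : G.V}
    (h : u ≠ v) : toDel G v w u = ⟨u, h⟩ := dif_neg h

lemma main_leaf_case {k : ℕ} {G : HalfEdgeGraph} {f : G.F}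
    (hphi : IsPhiKGraph k G) (hf : G.inv f ≠ f)
    (hfv : G.att f ≠ G.att (G.inv f))
    (hleaf : ∀ g : G.F, G.att g = G.att (G.inv f) → g ≠ G.inv f → G.inv g = g)
    (IH : ∀ G' : HalfEdgeGraph,
      Fintype.card {x : G'.F // G'.inv x ≠ x} < Fintype.card {x : G.F // G.inv x ≠ x} →
      IsPhiKGraph k G' → InLang k G') :
    InLang k G := by
  obtain ⟨Hinv, ⟨Hne, Hconn⟩, Hval⟩ := hphi
  set v := G.att (G.inv f) with hv
  set G' := deleteLeaf G v with hG'
  have hattE : G.att (G.inv f) = v := hv.symm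
  have hAux : ∀ g : G.F, G.att g ≠ v → (G.att (G.inv g) = v ↔ g = f) := by
    intro g hg
    constructor
    · intro h
      by_cases hge : G.inv g = G.inv f
      · exact Hinv.injective hge
      · have h2 := hleaf (G.inv g) h hge
        rw [Hinv] at h2
        rw [← h2] at h
        exact absurd h hg
    · intro h; rw [h]
  have hval' : ∀ g : G'.F, (G'.inv g).1 = if g.1 = f then f else G.inv g.1 := by
    intro g
    show ((if h : G.att (G.inv g.1) = v then g
      else (⟨G.inv g.1, h⟩ : {x : G.F // G.att x ≠ v})) : {x : G.F // G.att x ≠ v}).1 = _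
    by_cases h : G.att (G.inv g.1) = v
    · erw [dif_pos h, if_pos ((hAux g.1 g.2).mp h)]
      exact (hAux g.1 g.2).mp h
    · erw [dif_neg h, if_neg (fun hc => h (by rw [hc]))]
  have hinv'inv : Function.Involutive G'.inv := by
    intro g
    apply Subtype.ext
    rw [hval' (G'.inv g), hval' g]
    by_cases h : (g.1 : G.F) = f
    · rw [if_pos h, if_pos rfl]
      exact h.symm
    · rw [if_neg h]
      have hcond : G.inv g.1 ≠ f := by
        intro hc
        have : g.1 = G.inv f := Hinv.injective (by rw [hc, Hinv])
        exact g.2 (by rw [this])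
      rw [if_neg hcond, Hinv]
  have hval'' : ∀ u : G'.V, G'.valence u = k := by
    intro u
    rw [← Hval u.1]
    apply Fintype.card_congr
    refine ⟨fun x => ⟨x.1.1, congrArg Subtype.val x.2⟩,
      fun x => ⟨⟨x.1, by rw [x.2]; exact u.2⟩, Subtype.ext x.2⟩, ?_, ?_⟩
    · intro x; rfl
    · intro x; rfl
  have hconn' : G'.Connected := by
    set w : {u : G.V // u ≠ v} := ⟨G.att f, hfv⟩ with hw
    have hstep : ∀ a b : G.V, G.Adj a b →
        Relation.ReflTransGen G'.Adj (toDel G v w a) (toDel G v w b) := by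
      rintro a b ⟨g, hg, h1, h2⟩
      by_cases ha : a = v
      · have hge : g = G.inv f := by
          by_contra hc
          exact hg (hleaf g (h1.trans ha) hc)
        have hb : b = G.att f := by rw [← h2, hge, Hinv]
        rw [ha, hb, toDel_v, toDel_ne w hfv]; exact Relation.ReflTransGen.refl
      · by_cases hb : b = v
        · have hge : G.inv g = G.inv f := by
            by_contra hc
            have h3 := hleaf (G.inv g) (h2.trans hb) hc
            rw [Hinv] at h3
            exact hg h3.symm
          have hgf : g = f := Hinv.injective hge
          have ha' : a = G.att f := by rw [← h1, hgf]
          rw [ha', hb, toDel_v, toDel_ne w hfv]; exact Relation.ReflTransGen.refl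
        · have hgf : g ≠ f := by
            intro hc
            exact hb (by rw [← h2, hc])
          have hbint : G.att (G.inv g) ≠ v := by rw [h2]; exact hb
          have haint : G.att g ≠ v := by rw [h1]; exact ha
          refine Relation.ReflTransGen.single ⟨⟨g, haint⟩, ?_, ?_, ?_⟩
          · intro hq
            have := congrArg Subtype.val hq
            erw [hval', if_neg hgf] at this
            exact hg this
          · rw [toDel_ne w ha]
            exact Subtype.ext h1
          · rw [toDel_ne w hb]
            apply Subtype.ext
            show G.att ((G'.inv ⟨g, haint⟩).1) = b
            erw [hval', if_neg hgf]
            exact h2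
    refine ⟨⟨w⟩, fun u u' => ?_⟩
    have key : ∀ a b : G.V, Relation.ReflTransGen G.Adj a b →
        Relation.ReflTransGen G'.Adj (toDel G v w a) (toDel G v w b) := by
      intro a b hp
      induction hp with
      | refl => exact Relation.ReflTransGen.refl
      | tail p h ih => exact ih.trans (hstep _ _ h)
    have := key u.1 u'.1 (Hconn u.1 u'.1)
    rwa [toDel_ne w u.2, toDel_ne w u'.2] at this
  have hkeyfix : ∀ x : {x : G'.F // G'.inv x ≠ x}, G.inv x.1.1 ≠ x.1.1 := by
    intro x
    have hxf : (x.1.1 : G.F) ≠ f := by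
      intro hc
      exact x.2 (Subtype.ext (by rw [hval', if_pos hc, hc]))
    intro hc
    exact x.2 (Subtype.ext (by rw [hval', if_neg hxf]; exact hc))
  have hcardlt : Fintype.card {x : G'.F // G'.inv x ≠ x} <
      Fintype.card {x : G.F // G.inv x ≠ x} := by
    have hinj : Function.Injective (fun x : {x : G'.F // G'.inv x ≠ x} =>
        (⟨x.1.1, hkeyfix x⟩ : {x : G.F // G.inv x ≠ x})) := by
      intro a b hab
      simp only [Subtype.mk.injEq] at hab
      exact Subtype.ext (Subtype.ext hab)
    refine Fintype.card_lt_of_injective_of_notMem _ hinj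
      (b := ⟨G.inv f, by rw [Hinv]; exact fun hc => hf hc.symm⟩) ?_
    rintro ⟨x, hx⟩
    have hxe : (x.1.1 : G.F) = G.inv f := Subtype.ext_iff.mp hx
    exact x.1.2 (by rw [hxe])
  have hG'lang : InLang k G' := IH G' hcardlt ⟨hinv'inv, hconn', hval''⟩
  have e0 : Fin k ≃ {g : G.F // G.att g = v} := (Fintype.equivFinOfCardEq (Hval v)).symm
  set i := e0.symm ⟨G.inv f, hattE⟩ with hi
  have he0i : e0 i = ⟨G.inv f, hattE⟩ := e0.apply_symm_apply _
  have hfix : G'.inv ⟨f, hfv⟩ = ⟨f, hfv⟩ :=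
    Subtype.ext (by erw [hval', if_pos rfl])
  have hlangA : InLang k (attachCorolla G' ⟨f, hfv⟩ k i) :=
    InLang.attach hG'lang ⟨f, hfv⟩ hfix i
  set A := attachCorolla G' ⟨f, hfv⟩ k i with hA
  have hinvl : ∀ g : G'.F, A.inv (Sum.inl g) =
      (if g = (⟨f, hfv⟩ : G'.F) then Sum.inr i else Sum.inl (G'.inv g)) := fun _ => rfl
  have hinvr : ∀ j : Fin k, A.inv (Sum.inr j) =
      (if j = i then Sum.inl (⟨f, hfv⟩ : G'.F) else Sum.inr j) := fun _ => rfl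
  refine InLang.iso hlangA ?_
  refine ⟨⟨Sum.elim Subtype.val (fun _ => v),
      fun u => if h : u = v then Sum.inr PUnit.unit else Sum.inl ⟨u, h⟩, ?_, ?_⟩,
    ⟨Sum.elim Subtype.val (fun j => (e0 j).1),
      fun g => if h : G.att g = v then Sum.inr (e0.symm ⟨g, h⟩) else Sum.inl ⟨g, h⟩, ?_, ?_⟩,
    ?_, ?_⟩
  · rintro (u | u)
    · show (if h : (u : {u : G.V // u ≠ v}).1 = v then Sum.inr PUnit.unit
        else Sum.inl ⟨u.1, h⟩) = Sum.inl u
      rw [dif_neg u.2]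
      rfl
    · cases u
      exact dif_pos rfl
  · intro u
    by_cases h : u = v
    · show Sum.elim Subtype.val (fun _ => v)
        (if h : u = v then Sum.inr PUnit.unit else Sum.inl ⟨u, h⟩) = u
      rw [dif_pos h]
      exact h.symm
    · show Sum.elim Subtype.val (fun _ => v)
        (if h : u = v then Sum.inr PUnit.unit else Sum.inl ⟨u, h⟩) = u
      rw [dif_neg h]
      rfl
  · rintro (g | j)
    · show (if h : G.att (g : {x : G.F // G.att x ≠ v}).1 = v
        then Sum.inr (e0.symm ⟨g.1, h⟩) else Sum.inl ⟨g.1, h⟩) = Sum.inl g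
      rw [dif_neg g.2]
      rfl
    · simp only [Sum.elim_inr]
      erw [dif_pos (e0 j).2, Subtype.coe_eta, Equiv.symm_apply_apply]
  · intro g
    by_cases h : G.att g = v
    · show Sum.elim Subtype.val (fun j => (e0 j).1)
        (if h : G.att g = v then Sum.inr (e0.symm ⟨g, h⟩) else Sum.inl ⟨g, h⟩) = g
      rw [dif_pos h]
      show (e0 (e0.symm ⟨g, h⟩)).1 = g
      rw [Equiv.apply_symm_apply]
    · show Sum.elim Subtype.val (fun j => (e0 j).1)
        (if h : G.att g = v then Sum.inr (e0.symm ⟨g, h⟩) else Sum.inl ⟨g, h⟩) = g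
      rw [dif_neg h]
      rfl
  · rintro (g | j)
    · rfl
    · show v = G.att (e0 j).1
      exact (e0 j).2.symm
  · rintro (g | j)
    · by_cases h : g = (⟨f, hfv⟩ : G'.F)
      · rw [hinvl, if_pos h]
        show (e0 i).1 = G.inv (g.1)
        rw [he0i, h]
      · rw [hinvl, if_neg h]
        show (G'.inv g).1 = G.inv g.1
        rw [hval', if_neg (fun hc => h (Subtype.ext hc))]
    · by_cases h : j = i
      · rw [hinvr, if_pos h, h]
        show f = G.inv (e0 i).1
        rw [he0i, Hinv]
      · rw [hinvr, if_neg h]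
        show (e0 j).1 = G.inv (e0 j).1
        have hne : (e0 j).1 ≠ G.inv f := by
          intro hc
          exact h (e0.injective (by rw [he0i]; exact Subtype.ext hc))
        exact (hleaf _ (e0 j).2 hne).symm


lemma backward {k : ℕ} (hk : 3 ≤ k) :
    ∀ n (G : HalfEdgeGraph), Fintype.card {g : G.F // G.inv g ≠ g} ≤ n →
      IsPhiKGraph k G → InLang k G := by
  intro n
  induction n with
  | zero =>
    intro G hcard hphi
    refine lang_of_no_internal hphi fun g => ?_
    by_contra hg
    have : 0 < Fintype.card {x : G.F // G.inv x ≠ x} := Fintype.card_pos_iff.mpr ⟨⟨g, hg⟩⟩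
    omega
  | succ n ih =>
    intro G hcard hphi
    have Hinv := hphi.1
    by_cases h0 : ∀ g : G.F, G.inv g = g
    · exact lang_of_no_internal hphi h0
    · push_neg at h0
      by_cases hex : ∃ g : G.F, G.inv g ≠ g ∧ (cutE G g).Connected
      · obtain ⟨g, hg, hconn⟩ := hex
        have hphiC : IsPhiKGraph k (cutE G g) :=
          ⟨cutE_involutive Hinv, hconn, fun u => hphi.2.2 u⟩
        have hlt : Fintype.card {x : (cutE G g).F // (cutE G g).inv x ≠ x} <
            Fintype.card {x : G.F // G.inv x ≠ x} := by
          have hkey : ∀ x : {x : (cutE G g).F // (cutE G g).inv x ≠ x},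
              G.inv (x.1 : G.F) ≠ x.1 := by
            rintro ⟨x, hx⟩
            intro hc
            apply hx
            show (cutE G g).inv x = x
            by_cases h : (x : G.F) = g ∨ (x : G.F) = G.inv g
            · erw [cutE_inv (G := G) (f := g) x, if_pos h]
            · rw [not_or] at h
              rw [cutE_inv_ne Hinv h.1 h.2]
              exact hc
          have hinj : Function.Injective
              (fun x : {x : (cutE G g).F // (cutE G g).inv x ≠ x} =>
                (⟨x.1, hkey x⟩ : {x : G.F // G.inv x ≠ x})) := by
            intro a b hab
            simp only [Subtype.mk.injEq] at hab
            have hab' := congrArg Subtype.val hab; exact Subtype.ext hab'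
          refine Fintype.card_lt_of_injective_of_notMem _ hinj (b := ⟨g, hg⟩) ?_
          rintro ⟨x, hx⟩
          have hxg : (x.1 : G.F) = g := Subtype.ext_iff.mp hx
          apply x.2
          show (cutE G g).inv x.1 = x.1
          erw [cutE_inv (G := G) (f := g) x.1, if_pos (Or.inl hxg)]
        have hC : InLang k (cutE G g) := ih (cutE G g) (by omega) hphiC
        have hJ : InLang k (joinExt (cutE G g) g (G.inv g)) :=
          InLang.join hC g (G.inv g) cutE_inv_fix_left cutE_inv_fix_right
            (fun h => hg h.symm)
        refine InLang.iso hJ ?_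
        refine ⟨Equiv.refl _, Equiv.refl _, fun x => rfl, fun x => ?_⟩
        show (if (x : G.F) = g then G.inv g else if (x : G.F) = G.inv g then g
          else (cutE G g).inv x) = G.inv x
        by_cases h1 : (x : G.F) = g
        · rw [if_pos h1, h1]
        · by_cases h2 : (x : G.F) = G.inv g
          · erw [if_neg h1, if_pos h2, h2, Hinv]
          · erw [if_neg h1, if_neg h2, cutE_inv_ne Hinv h1 h2]
      · have hall : ∀ g : G.F, G.inv g ≠ g → ¬ (cutE G g).Connected :=
          fun g hg hc => hex ⟨g, hg, hc⟩
        obtain ⟨f, hf, hfv, hleaf⟩ := exists_leaf hphi h0 hall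
        exact main_leaf_case hphi hf hfv hleaf
          (fun G' hlt hphi' => ih G' (by omega) hphi')

end PhiKAux

/-- the graph language generated by the `k`-corolla under the two
production rules is exactly the set of `φ^k`-Feynman graphs. -/
theorem phiK_graph_language (k : ℕ) (hk : 3 ≤ k) :
    ∀ G : HalfEdgeGraph, InLang k G ↔ IsPhiKGraph k G := by
  intro G
  constructor
  · exact PhiKAux.forward hk
  · exact PhiKAux.backward hk (Fintype.card {g : G.F // G.inv g ≠ g}) G le_rfl
end
end

section
/- Fix a finite nonempty set S of integers, each at least 3. Call a graph in the half-edge formalism an S-graph if it is finite, connected, and the valence of every vertex belongs to S. Let L be the smallest set of isomorphism classes of graphs in the half-edge formalism such that: (i) for each k ∈ S, the k-corolla (a single vertex with k external half-edges) belongs to L; (ii) if G ∈ L and f ≠ f' are two external half-edges of G, then the graph obtained from G by joining f and f' into an internal edge belongs to L; (iii) if G ∈ L, k ∈ S, and f is an external half-edge of G, then the graph obtained by taking the disjoint union of G with a k-corolla and joining f to one half-edge of the corolla belongs to L. Then L is exactly the set of isomorphism classes of S-graphs. -/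
open scoped Classical

noncomputable section

/-- The smallest (isomorphism-invariant) class of half-edge graphs containing the
`k`-corolla for every `k ∈ S` and closed under joining two external half-edges and
under attaching a fresh `k`-corolla (`k ∈ S`) along an external half-edge. -/
inductive InLangS (S : Finset ℕ) : HalfEdgeGraph → Prop
  | corolla {k : ℕ} (hk : k ∈ S) : InLangS S (corolla k)
  | join {G : HalfEdgeGraph} (hG : InLangS S G) (f f' : G.F)
      (hf : G.inv f = f) (hf' : G.inv f' = f') (hne : f ≠ f') :
      InLangS S (joinExt G f f')
  | attach {G : HalfEdgeGraph} (hG : InLangS S G) (f : G.F) (hf : G.inv f = f)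
      {k : ℕ} (hk : k ∈ S) (i : Fin k) : InLangS S (attachCorolla G f k i)
  | iso {G G' : HalfEdgeGraph} (hG : InLangS S G) (h : G.Iso G') : InLangS S G'

/-- An `S`-graph: a finite connected half-edge graph (with genuine involution) all of
whose vertices have valence belonging to `S`. -/
def IsSGraph (S : Finset ℕ) (G : HalfEdgeGraph) : Prop :=
  Function.Involutive G.inv ∧ G.Connected ∧ ∀ v : G.V, G.valence v ∈ S

namespace HalfEdgeGraph

lemma adj_symm {G : HalfEdgeGraph} (hinv : Function.Involutive G.inv) :
    Symmetric G.Adj := by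
  rintro u v ⟨f, hne, rfl, rfl⟩
  refine ⟨G.inv f, ?_, rfl, by rw [hinv f]⟩
  rw [hinv f]
  exact Ne.symm hne

lemma iso_isSGraph {S : Finset ℕ} {G G' : HalfEdgeGraph} (h : G.Iso G')
    (hG : IsSGraph S G) : IsSGraph S G' := by
  obtain ⟨eV, eF, hatt, hinvc⟩ := h
  obtain ⟨hinv, ⟨hne, hconn⟩, hval⟩ := hG
  have hadj : ∀ u v, G.Adj u v → G'.Adj (eV u) (eV v) := by
    rintro u v ⟨f, hf, rfl, rfl⟩
    refine ⟨eF f, ?_, (hatt f).symm, ?_⟩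
    · rw [← hinvc f]
      exact fun h => hf (eF.injective h)
    · rw [← hinvc f, ← hatt (G.inv f)]
  refine ⟨?_, ⟨⟨eV hne.some⟩, ?_⟩, ?_⟩
  · intro f'
    have h1 : G'.inv f' = eF (G.inv (eF.symm f')) := by
      rw [hinvc (eF.symm f'), eF.apply_symm_apply]
    rw [h1, ← hinvc, hinv, eF.apply_symm_apply]
  · intro u v
    have h2 := Relation.ReflTransGen.lift eV (fun a b hab => hadj a b hab) _ _
      (hconn (eV.symm u) (eV.symm v))
    simpa [Function.onFun] using h2
  · intro v'
    have hv : G'.valence v' = G.valence (eV.symm v') := by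
      unfold valence
      refine (Fintype.card_congr (Equiv.subtypeEquiv eF.symm fun f' => ?_)).symm.symm
      have h3 : eV (G.att (eF.symm f')) = G'.att f' := by
        rw [hatt (eF.symm f'), eF.apply_symm_apply]
      constructor
      · rintro rfl
        rw [← h3, eV.symm_apply_apply]
      · intro h
        rw [← eV.apply_symm_apply v', ← h, h3]
    rw [hv]
    exact hval _

lemma corolla_isSGraph {S : Finset ℕ} {k : ℕ} (hk : k ∈ S) : IsSGraph S (corolla k) := by
  refine ⟨fun f => rfl, ⟨⟨PUnit.unit⟩, fun u v => by
      cases u; cases v; exact Relation.ReflTransGen.refl⟩, ?_⟩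
  intro v
  have hval : (corolla k).valence v = k := by
    unfold valence
    rw [Fintype.card_congr (Equiv.subtypeUnivEquiv fun f => by cases v; rfl)]
    exact Fintype.card_fin k
  rwa [hval]

lemma join_isSGraph {S : Finset ℕ} {G : HalfEdgeGraph} (hG : IsSGraph S G)
    (f f' : G.F) (hf : G.inv f = f) (hf' : G.inv f' = f') (hne : f ≠ f') :
    IsSGraph S (joinExt G f f') := by
  obtain ⟨hinv, ⟨hv, hconn⟩, hval⟩ := hG
  have hJ : ∀ g, (joinExt G f f').inv g
      = if g = f then f' else if g = f' then f else G.inv g := fun g => rfl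
  refine ⟨?_, ⟨hv, ?_⟩, hval⟩
  · intro g
    by_cases h1 : g = f
    · erw [h1, hJ f, if_pos rfl, hJ f', if_neg (Ne.symm hne), if_pos rfl]
    by_cases h2 : g = f'
    · erw [h2, hJ f', if_neg (Ne.symm hne), if_pos rfl, hJ f, if_pos rfl]
    · have hg1 : G.inv g ≠ f := fun h => h1 (by rw [← hinv g, h, hf])
      have hg2 : G.inv g ≠ f' := fun h => h2 (by rw [← hinv g, h, hf'])
      erw [hJ g, if_neg h1, if_neg h2, hJ (G.inv g), if_neg hg1, if_neg hg2]
      exact hinv g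
  · intro u v
    refine Relation.ReflTransGen.mono (fun a b hab => ?_) _ _ (hconn u v)
    obtain ⟨g, hg, h1, h2⟩ := hab
    have hgf : g ≠ f := fun h => hg (by rw [h, hf])
    have hgf' : g ≠ f' := fun h => hg (by rw [h, hf'])
    have hJg : (joinExt G f f').inv g = G.inv g := by
      erw [hJ, if_neg hgf, if_neg hgf']
    exact ⟨g, by rw [hJg]; exact hg, h1, by rw [hJg]; exact h2⟩

lemma attach_isSGraph {S : Finset ℕ} {G : HalfEdgeGraph} (hG : IsSGraph S G)
    (f : G.F) (hf : G.inv f = f) {k : ℕ} (hk : k ∈ S) (i : Fin k) :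
    IsSGraph S (attachCorolla G f k i) := by
  obtain ⟨hinv, ⟨hv, hconn⟩, hval⟩ := hG
  set A := attachCorolla G f k i with hA
  have hL : ∀ g : G.F, A.inv (Sum.inl g)
      = if g = f then Sum.inr i else Sum.inl (G.inv g) := fun g => rfl
  have hR : ∀ j : Fin k, A.inv (Sum.inr j)
      = if j = i then Sum.inl f else Sum.inr j := fun j => rfl
  have hinvA : Function.Involutive A.inv := by
    rintro (g | j)
    · by_cases h1 : g = f
      · rw [h1, hL f, if_pos rfl, hR i, if_pos rfl]
      · have h2 : G.inv g ≠ f := fun h => h1 (by rw [← hinv g, h, hf])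
        rw [hL g, if_neg h1, hL (G.inv g), if_neg h2, hinv g]
    · by_cases h1 : j = i
      · rw [h1, hR i, if_pos rfl, hL f, if_pos rfl]
      · rw [hR j, if_neg h1, hR j, if_neg h1]
  have hlift : ∀ a b, G.Adj a b → A.Adj (Sum.inl a) (Sum.inl b) := by
    rintro a b ⟨g, hg, rfl, rfl⟩
    have hgf : g ≠ f := fun h => hg (by rw [h, hf])
    refine ⟨Sum.inl g, ?_, rfl, ?_⟩
    · rw [hL, if_neg hgf]
      exact fun h => hg (Sum.inl.inj h)
    · rw [hL, if_neg hgf]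
      rfl
  have hstep : A.Adj (Sum.inr PUnit.unit) (Sum.inl (G.att f)) := by
    refine ⟨Sum.inr i, ?_, rfl, ?_⟩
    · rw [hR, if_pos rfl]
      exact fun h => Sum.inl_ne_inr h
    · rw [hR, if_pos rfl]
      rfl
  have hreach : ∀ u : G.V,
      Relation.ReflTransGen A.Adj (Sum.inl u) (Sum.inr PUnit.unit) := by
    intro u
    exact (Relation.ReflTransGen.lift Sum.inl hlift _ _ (hconn u (G.att f))).tail
      (adj_symm hinvA hstep)
  refine ⟨hinvA, ⟨⟨Sum.inr PUnit.unit⟩, ?_⟩, ?_⟩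
  · have hsym : ∀ {a b}, Relation.ReflTransGen A.Adj a b → Relation.ReflTransGen A.Adj b a :=
      fun h => (haveI : Std.Symm A.Adj := ⟨fun a b h => adj_symm hinvA h⟩; Std.Symm.symm _ _ h)
    rintro (u | u) (w | w)
    · exact Relation.ReflTransGen.lift Sum.inl hlift _ _ (hconn u w)
    · cases w; exact hreach u
    · cases u; exact hsym (hreach w)
    · cases u; cases w; exact Relation.ReflTransGen.refl
  · rintro (u | u)
    · have hbij : Function.Bijective
          (fun x : {g : G.F // G.att g = u} =>
            (⟨Sum.inl x.1, congrArg Sum.inl x.2⟩ : {x : A.F // A.att x = Sum.inl u})) := by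
        constructor
        · rintro ⟨g, hg⟩ ⟨g', hg'⟩ h
          exact Subtype.ext (Sum.inl.inj (congrArg Subtype.val h))
        · rintro ⟨(g | j), h⟩
          · exact ⟨⟨g, Sum.inl.inj h⟩, rfl⟩
          · exact (Sum.inr_ne_inl h).elim
      have : G.valence u = A.valence (Sum.inl u) := Fintype.card_of_bijective hbij
      rw [← this]
      exact hval u
    · cases u
      have hbij : Function.Bijective
          (fun j : Fin k =>
            (⟨Sum.inr j, rfl⟩ : {x : A.F // A.att x = Sum.inr PUnit.unit})) := by
        constructor
        · intro j j' h
          exact Sum.inr.inj (congrArg Subtype.val h)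
        · rintro ⟨(g | j), h⟩
          · exact (Sum.inl_ne_inr h).elim
          · exact ⟨j, rfl⟩
      have : k = A.valence (Sum.inr PUnit.unit) := by
        rw [← Fintype.card_fin k]
        exact Fintype.card_of_bijective hbij
      rw [← this]
      exact hk

lemma inLang_isSGraph {S : Finset ℕ} {G : HalfEdgeGraph} (h : InLangS S G) :
    IsSGraph S G := by
  induction h with
  | corolla hk => exact corolla_isSGraph hk
  | join hG f f' hf hf' hne ih => exact join_isSGraph ih f f' hf hf' hne
  | attach hG f hf hk i ih => exact attach_isSGraph ih f hf hk i
  | iso hG hiso ih => exact iso_isSGraph hiso ih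

end HalfEdgeGraph
/-- Make the internal edge through `f` external again. -/
def HalfEdgeGraph.detach (G : HalfEdgeGraph) (f : G.F) : HalfEdgeGraph where
  V := G.V
  F := G.F
  att := G.att
  inv := fun g => if g = f ∨ g = G.inv f then g else G.inv g

/-- Delete the leaf vertex `G.att f0` together with all half-edges attached to it. -/
def HalfEdgeGraph.deleteLeaf (G : HalfEdgeGraph) (f0 : G.F) : HalfEdgeGraph where
  V := {u : G.V // u ≠ G.att f0}
  F := {g : G.F // G.att g ≠ G.att f0}
  att := fun g => ⟨G.att g.1, g.2⟩
  inv := fun g => if h : G.att (G.inv g.1) ≠ G.att f0 then ⟨G.inv g.1, h⟩ else g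

/-- Induction measure: number of vertices plus number of internal half-edges. -/
def HalfEdgeGraph.msr (G : HalfEdgeGraph) : ℕ :=
  Fintype.card G.V + Fintype.card {f : G.F // G.inv f ≠ f}

namespace HalfEdgeGraph

variable {G : HalfEdgeGraph}

lemma detach_inv (f g : G.F) :
    (G.detach f).inv g = if g = f ∨ g = G.inv f then g else G.inv g := rfl

lemma detach_adj_of (f g : G.F) (h1 : g ≠ f) (h2 : g ≠ G.inv f)
    (hg : G.inv g ≠ g) : (G.detach f).Adj (G.att g) (G.att (G.inv g)) := by
  refine ⟨g, ?_, rfl, ?_⟩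
  · rw [detach_inv, if_neg (by tauto)]
    exact hg
  · rw [detach_inv, if_neg (by tauto)]
    rfl

lemma detach_involutive (hinv : Function.Involutive G.inv) (f : G.F) :
    Function.Involutive (G.detach f).inv := by
  show ∀ g : G.F, (G.detach f).inv ((G.detach f).inv g) = g
  intro g
  by_cases h : g = f ∨ g = G.inv f
  · rw [detach_inv f g, if_pos h, detach_inv f g, if_pos h]
  · push_neg at h
    have hg1 : G.inv g ≠ f := fun hh => h.2 (by rw [← hinv g, hh])
    have hg2 : G.inv g ≠ G.inv f := fun hh => h.1 (hinv.injective hh)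
    rw [detach_inv f g, if_neg (by tauto), detach_inv f (G.inv g),
      if_neg (by tauto)]
    exact hinv g

lemma detach_conn_of_lift (hc : G.Connected) (f : G.F)
    (h : ∀ a b, G.Adj a b → Relation.ReflTransGen (G.detach f).Adj a b) :
    (G.detach f).Connected := by
  refine ⟨hc.1, fun u v => ?_⟩
  have hg := hc.2 u v
  induction hg with
  | refl => exact Relation.ReflTransGen.refl
  | tail _ hstep ih => exact ih.trans (h _ _ hstep)

lemma msr_detach_lt {f : G.F} (hf : G.inv f ≠ f) : (G.detach f).msr < G.msr := by
  have h1 : Fintype.card (G.detach f).V = Fintype.card G.V :=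
    Fintype.card_congr (Equiv.refl G.V)
  have h2 : Fintype.card {g : (G.detach f).F // (G.detach f).inv g ≠ g}
      < Fintype.card {g : G.F // G.inv g ≠ g} := by
    have key : ∀ g : G.F, (G.detach f).inv g ≠ g → G.inv g ≠ g := by
      intro g hg
      by_cases h : g = f ∨ g = G.inv f
      · rw [detach_inv, if_pos h] at hg
        exact absurd rfl hg
      · rwa [detach_inv, if_neg h] at hg
    refine Fintype.card_lt_of_injective_of_notMem
      (fun x => ⟨x.1, key x.1 x.2⟩) ?_ (b := ⟨f, hf⟩) ?_
    · intro x y hxy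
      apply Subtype.ext
      have := congrArg Subtype.val hxy
      exact this
    · rintro ⟨⟨g, hg⟩, hval⟩
      have hgf : g = f := congrArg Subtype.val hval
      erw [detach_inv, if_pos (Or.inl hgf)] at hg
      exact hg rfl
  unfold msr
  omega

/-- Undoing a join: `G` is isomorphic to the join of its detachment. -/
lemma join_detach_iso (hinv : Function.Involutive G.inv) {f : G.F}
    (hf : G.inv f ≠ f) : (joinExt (G.detach f) f (G.inv f)).Iso G := by
  refine ⟨Equiv.refl G.V, Equiv.refl G.F, fun g => rfl, fun g => ?_⟩
  show (if g = f then G.inv f else if g = G.inv f then f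
    else (G.detach f).inv g) = G.inv g
  by_cases h1 : g = f
  · rw [if_pos h1, h1]
  by_cases h2 : g = G.inv f
  · erw [if_neg h1, if_pos h2, h2, hinv f]
  · erw [if_neg h1, if_neg h2, detach_inv, if_neg (by tauto)]

end HalfEdgeGraph
namespace HalfEdgeGraph

variable {G : HalfEdgeGraph}

lemma no_loop (hinv : Function.Involutive G.inv) (hc : G.Connected)
    (HB : ∀ f : G.F, G.inv f ≠ f → ¬ (G.detach f).Connected)
    {f : G.F} (hf : G.inv f ≠ f) : G.att (G.inv f) ≠ G.att f := by
  intro hl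
  apply HB f hf
  apply detach_conn_of_lift hc
  rintro a b ⟨g, hg, rfl, rfl⟩
  by_cases h1 : g = f
  · rw [h1, hl]; exact Relation.ReflTransGen.refl
  by_cases h2 : g = G.inv f
  · rw [h2, hinv f, hl]; exact Relation.ReflTransGen.refl
  · exact Relation.ReflTransGen.single (detach_adj_of f g h1 h2 hg)

lemma no_parallel (hinv : Function.Involutive G.inv) (hc : G.Connected)
    (HB : ∀ f : G.F, G.inv f ≠ f → ¬ (G.detach f).Connected)
    {f g : G.F} (hf : G.inv f ≠ f) (hg : G.inv g ≠ g)
    (he1 : G.att g = G.att f) (he2 : G.att (G.inv g) = G.att (G.inv f)) :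
    g = f ∨ g = G.inv f := by
  by_contra hcon
  push_neg at hcon
  obtain ⟨hgf, hgf'⟩ := hcon
  have hinvg_f : G.inv g ≠ f := fun h => hgf' (by rw [← hinv g, h])
  have hinvg_f' : G.inv g ≠ G.inv f := fun h => hgf (hinv.injective h)
  have hg' : G.inv (G.inv g) ≠ G.inv g := by
    rw [hinv g]
    exact fun h => hg h.symm
  apply HB f hf
  apply detach_conn_of_lift hc
  rintro a b ⟨h, hh, rfl, rfl⟩
  by_cases h1 : h = f
  · rw [h1]
    have hadj := detach_adj_of f g hgf hgf' hg
    rw [he1, he2] at hadj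
    exact Relation.ReflTransGen.single hadj
  by_cases h2 : h = G.inv f
  · rw [h2, hinv f]
    have hadj := detach_adj_of f (G.inv g) hinvg_f hinvg_f' hg'
    rw [hinv g, he1, he2] at hadj
    exact Relation.ReflTransGen.single hadj
  · exact Relation.ReflTransGen.single (detach_adj_of f h h1 h2 hh)

lemma exists_leaf (hinv : Function.Involutive G.inv) (hc : G.Connected)
    (HB : ∀ f : G.F, G.inv f ≠ f → ¬ (G.detach f).Connected)
    {f1 : G.F} (hf1 : G.inv f1 ≠ f1) :
    ∃ f0 : G.F, G.inv f0 ≠ f0 ∧ G.att (G.inv f0) ≠ G.att f0 ∧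
      ∀ g, G.att g = G.att f0 → G.inv g ≠ g → g = f0 := by
  classical
  -- the simple graph underlying `G`
  let SG : SimpleGraph G.V :=
    { Adj := fun u v => u ≠ v ∧ G.Adj u v
      symm := ⟨fun u v h => ⟨h.1.symm, adj_symm hinv h.2⟩⟩
      loopless := ⟨fun v h => h.1 rfl⟩ }
  have hSGadj : ∀ {u v : G.V}, SG.Adj u v ↔ u ≠ v ∧ G.Adj u v := Iff.rfl
  have hreach : ∀ u v : G.V, SG.Reachable u v := by
    intro u v
    have h := hc.2 u v
    induction h with
    | refl => exact SimpleGraph.Reachable.refl _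
    | @tail b c _ hstep ih =>
        by_cases hbc : b = c
        · exact hbc ▸ ih
        · exact ih.trans (SimpleGraph.Adj.reachable ⟨hbc, hstep⟩)
  have SGconn : SG.Connected := by
    haveI : Nonempty G.V := hc.1
    exact ⟨fun u v => hreach u v⟩
  -- every edge of `SG` is a bridge
  have hbridge : ∀ ⦃x y : G.V⦄, SG.Adj x y → SG.IsBridge s(x, y) := by
    intro x y hxy
    rw [SimpleGraph.isBridge_iff]
    refine fun hre => ?_
    obtain ⟨hne', f, hf, hfx, hfy⟩ := hxy
    apply HB f hf
    have key : ∀ a b : G.V, (SG \ SimpleGraph.fromEdgeSet {s(x, y)}).Reachable a b →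
        Relation.ReflTransGen (G.detach f).Adj a b := by
      intro a b hab
      obtain ⟨w⟩ := hab
      induction w with
      | nil => exact Relation.ReflTransGen.refl
      | @cons a c b hadj p ih =>
          refine Relation.ReflTransGen.head ?_ ih
          rw [SimpleGraph.sdiff_adj] at hadj
          obtain ⟨⟨hac, g, hg, hga, hgc⟩, hnotin⟩ := hadj
          have hsne : s(a, c) ≠ s(x, y) := by
            intro hs
            apply hnotin
            rw [SimpleGraph.fromEdgeSet_adj]
            exact ⟨by rw [hs]; exact Set.mem_singleton _, hac⟩
          have hg1 : g ≠ f := by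
            rintro rfl
            exact hsne (by rw [← hga, ← hgc, hfx, hfy])
          have hg2 : g ≠ G.inv f := by
            rintro rfl
            apply hsne
            rw [← hga, ← hgc, hinv f, hfx, hfy, Sym2.eq_swap]
          have hadj' := detach_adj_of f g hg1 hg2 hg
          rw [hga, hgc] at hadj'
          exact hadj'
    apply detach_conn_of_lift hc
    rintro a b ⟨h, hh, rfl, rfl⟩
    by_cases h1 : h = f
    · rw [h1, hfx, hfy]
      exact key x y hre
    by_cases h2 : h = G.inv f
    · rw [h2, hinv f, hfx, hfy]
      exact key y x hre.symm
    · exact Relation.ReflTransGen.single (detach_adj_of f h h1 h2 hh)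
  have htree : SG.IsTree :=
    ⟨SGconn, SimpleGraph.isAcyclic_iff_forall_adj_isBridge.mpr hbridge⟩
  have hcard := htree.card_edgeFinset
  -- some vertex has degree one
  have hV2 : G.att (G.inv f1) ≠ G.att f1 := no_loop hinv hc HB hf1
  have hdeg1 : ∃ v : G.V, SG.degree v = 1 := by
    by_contra hno
    push_neg at hno
    have hge : ∀ v : G.V, 2 ≤ SG.degree v := by
      intro v
      have hpos : 0 < SG.degree v := by
        rw [SimpleGraph.degree_pos_iff_exists_adj]
        have hw : ∃ w : G.V, w ≠ v := by
          by_cases hv : v = G.att f1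
          · exact ⟨G.att (G.inv f1), by rw [hv]; exact hV2⟩
          · exact ⟨G.att f1, fun h => hv h.symm⟩
        obtain ⟨w, hw⟩ := hw
        obtain ⟨p⟩ := hreach v w
        cases p with
        | nil => exact absurd rfl hw.symm
        | cons hadj _ => exact ⟨_, hadj⟩
      have := hno v
      omega
    have hsum := SimpleGraph.sum_degrees_eq_twice_card_edges SG
    have h2 : 2 * Fintype.card G.V ≤ ∑ v : G.V, SG.degree v := by
      calc 2 * Fintype.card G.V = ∑ _v : G.V, 2 := by
            simp [Finset.sum_const, mul_comm]
        _ ≤ _ := Finset.sum_le_sum fun v _ => hge v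
    rw [hsum] at h2
    omega
  obtain ⟨v, hv⟩ := hdeg1
  have hpos : 0 < SG.degree v := by omega
  rw [SimpleGraph.degree_pos_iff_exists_adj] at hpos
  obtain ⟨w, hw⟩ := hpos
  obtain ⟨hvw, f0, hf0, hatt0, hatt0'⟩ := hw
  refine ⟨f0, hf0, ?_, ?_⟩
  · exact no_loop hinv hc HB hf0
  · intro g hgv hg
    have hvg : G.att g = v := by rw [hgv, hatt0]
    have hnl := no_loop hinv hc HB hg
    have hw' : G.att (G.inv g) ∈ SG.neighborFinset v := by
      rw [SimpleGraph.mem_neighborFinset]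
      refine ⟨fun h => hnl (hvg.trans h).symm, ?_⟩
      rw [← hvg]
      exact ⟨g, hg, rfl, rfl⟩
    have hwmem : w ∈ SG.neighborFinset v := by
      rw [SimpleGraph.mem_neighborFinset]
      exact ⟨hvw, f0, hf0, hatt0, hatt0'⟩
    have hcard1 : (SG.neighborFinset v).card = 1 := by
      rw [SimpleGraph.card_neighborFinset_eq_degree]
      exact hv
    have heq : G.att (G.inv g) = w := by
      obtain ⟨x, hx⟩ := Finset.card_eq_one.mp hcard1
      rw [hx, Finset.mem_singleton] at hw' hwmem
      rw [hw', hwmem]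
    have := no_parallel hinv hc HB hf0 hg (by rw [hgv, hatt0])
      (by rw [heq, hatt0'])
    rcases this with h | h
    · exact h
    · exfalso
      have h5 : G.att (G.inv f0) = v := by rw [← h, hgv, hatt0]
      rw [hatt0'] at h5
      exact hvw h5.symm

end HalfEdgeGraph
namespace HalfEdgeGraph

variable {G : HalfEdgeGraph}

lemma dl_inv {f0 : G.F} (g : (G.deleteLeaf f0).F) :
    (G.deleteLeaf f0).inv g =
      if h : G.att (G.inv g.1) ≠ G.att f0 then ⟨G.inv g.1, h⟩ else g := rfl

lemma dl_involutive (hinv : Function.Involutive G.inv) (f0 : G.F) :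
    Function.Involutive (G.deleteLeaf f0).inv := by
  intro g
  by_cases hc1 : G.att (G.inv g.1) ≠ G.att f0
  · erw [dl_inv g, dif_pos hc1, dl_inv,
      dif_pos (show G.att (G.inv (G.inv g.1)) ≠ G.att f0 by rw [hinv g.1]; exact g.2)]
    exact Subtype.ext (hinv g.1)
  · erw [dl_inv g, dif_neg hc1, dl_inv g, dif_neg hc1]

lemma msr_deleteLeaf_lt {f0 : G.F} : (G.deleteLeaf f0).msr < G.msr := by
  classical
  have h1 : Fintype.card (G.deleteLeaf f0).V < Fintype.card G.V := by
    have hnp : ¬ (G.att f0 ≠ G.att f0) := fun h => h rfl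
    exact Fintype.card_subtype_lt hnp
  have h2 : Fintype.card {g : (G.deleteLeaf f0).F // (G.deleteLeaf f0).inv g ≠ g}
      ≤ Fintype.card {g : G.F // G.inv g ≠ g} := by
    refine Fintype.card_le_of_injective (fun x => ⟨x.1.1, fun hgg => ?_⟩) ?_
    · apply x.2
      erw [dl_inv, dif_pos (show G.att (G.inv x.1.1) ≠ G.att f0 from by
        rw [hgg]; exact x.1.2)]
      exact Subtype.ext hgg
    · intro a b hab
      apply Subtype.ext
      apply Subtype.ext
      have := congrArg Subtype.val hab
      exact this
  unfold msr
  omega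

lemma dl_valence {f0 : G.F} (w : (G.deleteLeaf f0).V) :
    (G.deleteLeaf f0).valence w = G.valence w.1 := by
  unfold valence
  refine Fintype.card_congr ⟨fun x => ⟨x.1.1, congrArg Subtype.val x.2⟩,
    fun y => ⟨⟨y.1, by rw [y.2]; exact w.2⟩, Subtype.ext y.2⟩, fun x => ?_, fun y => ?_⟩
  · apply Subtype.ext; apply Subtype.ext; rfl
  · apply Subtype.ext; rfl

lemma dl_connected (hinv : Function.Involutive G.inv) (hc : G.Connected) {f0 : G.F}
    (hint : G.inv f0 ≠ f0) (hne : G.att (G.inv f0) ≠ G.att f0)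
    (huniq : ∀ g, G.att g = G.att f0 → G.inv g ≠ g → g = f0) :
    (G.deleteLeaf f0).Connected := by
  classical
  let DL := G.deleteLeaf f0
  let proj : G.V → DL.V := fun x =>
    if h : x = G.att f0 then ⟨G.att (G.inv f0), hne⟩ else ⟨x, h⟩
  have hproj : ∀ a : DL.V, proj a.1 = a := fun a => dif_neg a.2
  have hstep : ∀ a b, G.Adj a b → Relation.ReflTransGen DL.Adj (proj a) (proj b) := by
    rintro a b ⟨g, hg, rfl, rfl⟩
    by_cases hx : G.att g = G.att f0
    · have hg0 : g = f0 := huniq g hx hg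
      rw [hg0]
      have h1 : proj (G.att f0) = ⟨G.att (G.inv f0), hne⟩ := dif_pos rfl
      have h2 : proj (G.att (G.inv f0)) = ⟨G.att (G.inv f0), hne⟩ := dif_neg hne
      rw [h1, h2]; exact Relation.ReflTransGen.refl
    · by_cases hy : G.att (G.inv g) = G.att f0
      · have hg0 : G.inv g = f0 := huniq _ hy (by rw [hinv g]; exact fun h => hg h.symm)
        have hgf : g = G.inv f0 := by rw [← hg0, hinv g]
        have h1 : proj (G.att g) = ⟨G.att g, hx⟩ := dif_neg hx
        have h2 : proj (G.att (G.inv g)) = ⟨G.att (G.inv f0), hne⟩ := dif_pos hy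
        rw [h1, h2, show (⟨G.att g, hx⟩ : DL.V) = ⟨G.att (G.inv f0), hne⟩ from
          Subtype.ext (congrArg G.att hgf)]; exact Relation.ReflTransGen.refl
      · have h1 : proj (G.att g) = ⟨G.att g, hx⟩ := dif_neg hx
        have h2 : proj (G.att (G.inv g)) = ⟨G.att (G.inv g), hy⟩ := dif_neg hy
        rw [h1, h2]
        refine Relation.ReflTransGen.single ⟨⟨g, hx⟩, ?_, rfl, ?_⟩
        · erw [dl_inv, dif_pos hy]
          exact fun h => hg (congrArg Subtype.val h)
        · erw [dl_inv, dif_pos hy]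
          rfl
  have hlift : ∀ x y : G.V, Relation.ReflTransGen G.Adj x y →
      Relation.ReflTransGen DL.Adj (proj x) (proj y) := by
    intro x y h
    induction h with
    | refl => exact Relation.ReflTransGen.refl
    | tail _ hs ih => exact ih.trans (hstep _ _ hs)
  refine ⟨⟨⟨G.att (G.inv f0), hne⟩⟩, fun a b => ?_⟩
  have hmain := hlift a.1 b.1 (hc.2 a.1 b.1)
  rwa [hproj a, hproj b] at hmain

lemma dl_iso (hinv : Function.Involutive G.inv) {f0 : G.F}
    (hint : G.inv f0 ≠ f0) (hne : G.att (G.inv f0) ≠ G.att f0)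
    (huniq : ∀ g, G.att g = G.att f0 → G.inv g ≠ g → g = f0) :
    ∃ (i : Fin (G.valence (G.att f0))) (r : (G.deleteLeaf f0).F),
      (G.deleteLeaf f0).inv r = r ∧
      (attachCorolla (G.deleteLeaf f0) r (G.valence (G.att f0)) i).Iso G := by
  classical
  have hfix : ∀ g, G.att g = G.att f0 → g ≠ f0 → G.inv g = g := by
    intro g h1 h2
    by_contra h
    exact h2 (huniq g h1 h)
  let ek : Fin (G.valence (G.att f0)) ≃ {f : G.F // G.att f = G.att f0} :=
    (Fintype.equivFin _).symm
  let i : Fin (G.valence (G.att f0)) := ek.symm ⟨f0, rfl⟩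
  have hek : ek i = ⟨f0, rfl⟩ := ek.apply_symm_apply _
  let r : (G.deleteLeaf f0).F := ⟨G.inv f0, hne⟩
  have hr : (G.deleteLeaf f0).inv r = r := by
    rw [dl_inv]
    refine dif_neg ?_
    rw [hinv f0]
    exact fun h => h rfl
  refine ⟨i, r, hr, ?_⟩
  let eP : PUnit ≃ {u : G.V // u = G.att f0} :=
    ⟨fun _ => ⟨G.att f0, rfl⟩, fun _ => PUnit.unit, fun _ => rfl,
      fun x => Subtype.ext x.2.symm⟩
  let eV : ((G.deleteLeaf f0).V ⊕ PUnit) ≃ G.V :=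
    ((Equiv.refl (G.deleteLeaf f0).V).sumCongr eP).trans
      ((Equiv.sumComm _ _).trans (Equiv.sumCompl (fun u : G.V => u = G.att f0)))
  let eF : ((G.deleteLeaf f0).F ⊕ Fin (G.valence (G.att f0))) ≃ G.F :=
    ((Equiv.refl (G.deleteLeaf f0).F).sumCongr ek).trans
      ((Equiv.sumComm _ _).trans (Equiv.sumCompl (fun g : G.F => G.att g = G.att f0)))
  have heV1 : ∀ u : (G.deleteLeaf f0).V, eV (Sum.inl u) = u.1 := fun u => rfl
  have heV2 : eV (Sum.inr PUnit.unit) = G.att f0 := rfl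
  have heF1 : ∀ g : (G.deleteLeaf f0).F, eF (Sum.inl g) = g.1 := fun g => rfl
  have heF2 : ∀ j, eF (Sum.inr j) = (ek j).1 := fun j => rfl
  refine ⟨eV, eF, ?_, ?_⟩
  · rintro (g | j)
    · show eV (Sum.inl ((G.deleteLeaf f0).att g)) = G.att (eF (Sum.inl g))
      rw [heF1, heV1]
      rfl
    · show eV (Sum.inr PUnit.unit) = G.att (eF (Sum.inr j))
      rw [heV2, heF2]
      exact ((ek j).2).symm
  · rintro (g | j)
    · show eF (if g = r then Sum.inr i else Sum.inl ((G.deleteLeaf f0).inv g)) =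
        G.inv (eF (Sum.inl g))
      rw [heF1]
      by_cases hgr : g = r
      · rw [if_pos hgr, heF2, hek, hgr]
        show f0 = G.inv (G.inv f0)
        rw [hinv f0]
      · rw [if_neg hgr, heF1]
        have hcond : G.att (G.inv g.1) ≠ G.att f0 := by
          intro hcc
          by_cases hgg : G.inv g.1 = g.1
          · exact g.2 (hgg ▸ hcc)
          · have hh := huniq _ hcc (by rw [hinv g.1]; exact fun h => hgg h.symm)
            apply hgr
            apply Subtype.ext
            have h4 : G.inv (G.inv g.1) = G.inv f0 := congrArg G.inv hh
            rw [hinv g.1] at h4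
            exact h4
        erw [dl_inv, dif_pos hcond]
    · show eF (if j = i then Sum.inl r else Sum.inr j) = G.inv (eF (Sum.inr j))
      rw [heF2]
      by_cases hji : j = i
      · rw [if_pos hji, heF1]
        show G.inv f0 = G.inv (ek j).1
        rw [hji, hek]
      · rw [if_neg hji, heF2]
        have hj0 : (ek j).1 ≠ f0 := by
          intro hh
          apply hji
          have h3 : ek j = ⟨f0, rfl⟩ := Subtype.ext hh
          rw [← hek] at h3
          exact ek.injective h3
        exact (hfix _ (ek j).2 hj0).symm

lemma isSGraph_inLang {S : Finset ℕ} (hS3 : ∀ k ∈ S, 3 ≤ k) {G : HalfEdgeGraph}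
    (hG : IsSGraph S G) : InLangS S G := by
  clear hS3
  suffices h : ∀ (n : ℕ) (G : HalfEdgeGraph), G.msr ≤ n → IsSGraph S G → InLangS S G from
    h G.msr G le_rfl hG
  intro n
  induction n with
  | zero =>
      intro G hm hG
      have h1 : 0 < Fintype.card G.V := Fintype.card_pos_iff.mpr hG.2.1.1
      unfold msr at hm
      omega
  | succ n ih =>
      intro G hm hG
      obtain ⟨hinv, hc, hval⟩ := hG
      by_cases hA : ∃ f : G.F, G.inv f ≠ f ∧ (G.detach f).Connected
      · obtain ⟨f, hf, hdc⟩ := hA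
        have hless := msr_detach_lt (G := G) hf
        have hd : InLangS S (G.detach f) := by
          apply ih _ (by omega)
          exact ⟨detach_involutive hinv f, hdc, fun v => hval v⟩
        have hj := InLangS.join hd f (G.inv f)
          (by rw [detach_inv, if_pos (Or.inl rfl)])
          (by rw [detach_inv, if_pos (Or.inr rfl)])
          (Ne.symm hf)
        exact InLangS.iso hj (join_detach_iso hinv hf)
      · by_cases hI : ∃ f : G.F, G.inv f ≠ f
        · obtain ⟨f1, hf1⟩ := hI
          push_neg at hA
          obtain ⟨f0, hint, hne, huniq⟩ := exists_leaf hinv hc hA hf1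
          have hless := msr_deleteLeaf_lt (G := G) (f0 := f0)
          have hDL : InLangS S (G.deleteLeaf f0) := by
            apply ih _ (by omega)
            exact ⟨dl_involutive hinv f0, dl_connected hinv hc hint hne huniq,
              fun w => by rw [dl_valence]; exact hval w.1⟩
          obtain ⟨i, r, hr, hiso⟩ := dl_iso hinv hint hne huniq
          exact InLangS.iso (InLangS.attach hDL r hr (hval (G.att f0)) i) hiso
        · push_neg at hI
          obtain ⟨⟨v0⟩, hconn⟩ := hc
          have heq : ∀ a b : G.V, Relation.ReflTransGen G.Adj a b → a = b := by
            intro a b h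
            induction h with
            | refl => rfl
            | tail _ hstep ih2 =>
                obtain ⟨f, hf, _, _⟩ := hstep
                exact absurd (hI f) hf
          have hall : ∀ u : G.V, u = v0 := fun u => heq u v0 (hconn u v0)
          have hkS : G.valence v0 ∈ S := hval v0
          refine InLangS.iso (InLangS.corolla hkS) ?_
          let eq1 : Fin (G.valence v0) ≃ {f : G.F // G.att f = v0} :=
            (Fintype.equivFin _).symm
          refine ⟨⟨fun _ => v0, fun _ => PUnit.unit, fun _ => rfl,
              fun u => (hall u).symm⟩,
            eq1.trans (Equiv.subtypeUnivEquiv fun f => hall (G.att f)),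
            fun f => ?_, fun f => ?_⟩
          · exact ((eq1 f).2).symm
          · show _ = G.inv _
            rw [hI]
            rfl

end HalfEdgeGraph
/-- for a finite nonempty set `S` of integers, all at least 3, the graph
language generated by the `S`-corollas under the production rules is exactly the set of
`S`-Feynman graphs (Feynman graphs of the theory with interaction `Σ_{k∈S} λ_k φ^k/k!`). -/
theorem sGraph_language (S : Finset ℕ) (hS : S.Nonempty) (hS3 : ∀ k ∈ S, 3 ≤ k) :
    ∀ G : HalfEdgeGraph, InLangS S G ↔ IsSGraph S G := by
  intro G
  exact ⟨fun h => HalfEdgeGraph.inLang_isSGraph h,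
    fun h => HalfEdgeGraph.isSGraph_inLang hS3 h⟩
end
end

section
/- Let R be a commutative ring and B a type. Suppose given: for each a ∈ B a finite set I(a) (of insertion positions); for each a ∈ B, i ∈ I(a), b ∈ B an element a ⊲ᵢ b ∈ B; and injections α_{a,i,b} : I(a) → I(a ⊲ᵢ b) and β_{a,i,b} : I(b) → I(a ⊲ᵢ b) whose images are disjoint and whose images together cover I(a ⊲ᵢ b). Assume for all a, b, c ∈ B and i ∈ I(a): (1) for every j ∈ I(b), (a ⊲ᵢ b) ⊲_{β_{a,i,b}(j)} c = a ⊲ᵢ (b ⊲ⱼ c); (2) for every j ∈ I(a), (a ⊲ᵢ b) ⊲_{α_{a,i,b}(j)} c = (a ⊲ⱼ c) ⊲_{α_{a,j,c}(i)} b. Then the bilinear extension to the free R-module on B of the operation a ⊲ b := Σ_{i ∈ I(a)} (a ⊲ᵢ b) satisfies the right pre-Lie identity. -/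
set_option maxSynthPendingDepth 3

/-- an abstract insertion system on a basis `B` — finite sets `I a` of
insertion positions, insertions `a ⊲ᵢ b`, and injections `α, β` with disjoint covering
images identifying the positions of `a ⊲ᵢ b` with those of `a` and of `b`, compatible
with composition — yields a right pre-Lie product on the free `R`-module on `B` by
`a ⊲ b := Σ_{i ∈ I a} (a ⊲ᵢ b)`. -/
theorem abstract_insertion_system_preLie (R : Type) [CommRing R] (B : Type)
    (I : B → Type) [∀ a, Fintype (I a)]
    (ins : ∀ a : B, I a → B → B)
    (α : ∀ (a : B) (i : I a) (b : B), I a → I (ins a i b))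
    (β : ∀ (a : B) (i : I a) (b : B), I b → I (ins a i b))
    (hα : ∀ a i b, Function.Injective (α a i b))
    (hβ : ∀ a i b, Function.Injective (β a i b))
    (hdisj : ∀ (a : B) (i : I a) (b : B) (j : I a) (k : I b), α a i b j ≠ β a i b k)
    (hcover : ∀ (a : B) (i : I a) (b : B) (k : I (ins a i b)),
      (∃ j, α a i b j = k) ∨ (∃ j, β a i b j = k))
    (h1 : ∀ (a b c : B) (i : I a) (j : I b),
      ins (ins a i b) (β a i b j) c = ins a i (ins b j c))
    (h2 : ∀ (a b c : B) (i j : I a),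
      ins (ins a i b) (α a i b j) c = ins (ins a j c) (α a j c i) b) :
    ∃ T : (B →₀ R) →ₗ[R] (B →₀ R) →ₗ[R] (B →₀ R),
      (∀ a b : B,
        T (Finsupp.single a 1) (Finsupp.single b 1)
          = ∑ i : I a, Finsupp.single (ins a i b) (1 : R)) ∧
      IsPreLie T := by
    classical
  -- the bilinear map
  set g : ∀ a : B, (B →₀ R) →ₗ[R] (B →₀ R) :=
    fun a => Finsupp.lsum R fun b => ∑ i : I a, Finsupp.lsingle (ins a i b) with hg
  set T : (B →₀ R) →ₗ[R] (B →₀ R) →ₗ[R] (B →₀ R) :=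
    Finsupp.lsum R (fun a => LinearMap.smulRight (LinearMap.id : R →ₗ[R] R) (g a)) with hTdef
  have hT : ∀ (a b : B) (r s : R), T (Finsupp.single a r) (Finsupp.single b s)
      = ∑ i : I a, Finsupp.single (ins a i b) (r * s) := by
    intro a b r s
    simp [hTdef, hg, Finsupp.smul_single, Finset.smul_sum, mul_comm]
  -- split of sums over I (ins a i b)
  have hsplit : ∀ (a : B) (i : I a) (b : B) (f : I (ins a i b) → (B →₀ R)),
      ∑ k : I (ins a i b), f k
        = ∑ j : I a, f (α a i b j) + ∑ j : I b, f (β a i b j) := by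
    intro a i b f
    have hbij : Function.Bijective (Sum.elim (α a i b) (β a i b)) := by
      constructor
      · rintro (x | x) (y | y) h <;> simp only [Sum.elim_inl, Sum.elim_inr] at h
        · exact congrArg Sum.inl (hα a i b h)
        · exact absurd h (hdisj a i b x y)
        · exact absurd h.symm (hdisj a i b y x)
        · exact congrArg Sum.inr (hβ a i b h)
      · intro k
        rcases hcover a i b k with ⟨j, hj⟩ | ⟨j, hj⟩
        exacts [⟨Sum.inl j, hj⟩, ⟨Sum.inr j, hj⟩]
    rw [← Fintype.sum_bijective _ hbij _ (fun k => f k) (fun _ => rfl),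
      Fintype.sum_sum_type]
    simp
  refine ⟨T, fun a b => by simpa using hT a b 1 1, ?_⟩
  -- the key identity on basis elements
  have key : ∀ a b c : B,
      T (T (Finsupp.single a (1:R)) (Finsupp.single b 1)) (Finsupp.single c 1)
        - T (Finsupp.single a 1) (T (Finsupp.single b 1) (Finsupp.single c 1))
      = T (T (Finsupp.single a (1:R)) (Finsupp.single c 1)) (Finsupp.single b 1)
        - T (Finsupp.single a 1) (T (Finsupp.single c 1) (Finsupp.single b 1)) := by
    intro a b c
    have expand : ∀ b c : B,
        T (T (Finsupp.single a (1:R)) (Finsupp.single b 1)) (Finsupp.single c 1)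
          - T (Finsupp.single a 1) (T (Finsupp.single b 1) (Finsupp.single c 1))
        = ∑ i : I a, ∑ j : I a,
            Finsupp.single (ins (ins a i b) (α a i b j) c) (1:R) := by
      intro b c
      rw [hT a b 1 1, map_sum, LinearMap.sum_apply]
      have e1 : ∀ i : I a, T (Finsupp.single (ins a i b) (1*1)) (Finsupp.single c 1)
          = ∑ j : I a, Finsupp.single (ins (ins a i b) (α a i b j) c) (1:R)
            + ∑ j : I b, Finsupp.single (ins a i (ins b j c)) (1:R) := by
        intro i
        rw [hT]
        simp only [one_mul, mul_one]
        rw [hsplit a i b (fun k => Finsupp.single (ins (ins a i b) k c) 1)]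
        simp [h1 a b c i]
      rw [Finset.sum_congr rfl (fun i _ => e1 i), Finset.sum_add_distrib]
      have e2 : T (Finsupp.single a (1:R)) (T (Finsupp.single b 1) (Finsupp.single c 1))
          = ∑ i : I a, ∑ j : I b, Finsupp.single (ins a i (ins b j c)) (1:R) := by
        rw [hT b c 1 1, map_sum]
        rw [Finset.sum_congr rfl (fun j _ => hT a (ins b j c) 1 (1*1)), Finset.sum_comm]
        simp
      rw [e2]
      abel
    rw [expand b c, expand c b]
    rw [Finset.sum_comm]
    exact Finset.sum_congr rfl fun i _ => Finset.sum_congr rfl fun j _ => by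
      rw [h2 a b c j i]
  -- extend to all elements by linearity
  intro x y z
  have hE : T.compr₂ T - ((LinearMap.llcomp R (B →₀ R) (B →₀ R) (B →₀ R)) ∘ₗ T).compl₂ T
      = (LinearMap.lflip (R₀ := R) : ((B →₀ R) →ₗ[R] (B →₀ R) →ₗ[R] (B →₀ R)) ≃ₗ[R] _).toLinearMap ∘ₗ
        (T.compr₂ T - ((LinearMap.llcomp R (B →₀ R) (B →₀ R) (B →₀ R)) ∘ₗ T).compl₂ T) := by
    ext a b c x
    simpa using DFunLike.congr_fun (key a b c) x
  have e := LinearMap.congr_fun (LinearMap.congr_fun (LinearMap.congr_fun hE x) y) z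
  simpa using e
end

section
/- Let R be a commutative ring. For finite rooted directed acyclic multigraphs G₁ and G₂ whose marked root vertices are sources, and for a sink vertex v of G₁ (a vertex that is the source of no edge), let G₁ ⊲_v G₂ denote the rooted directed acyclic multigraph obtained from the disjoint union of G₁ and G₂ by identifying the root of G₂ with v, rooted at the root of G₁. Then on the free R-module spanned by isomorphism classes of finite rooted directed acyclic multigraphs with source root, the operator G₁ ⊲ G₂ := Σ_{v a sink of G₁} [G₁ ⊲_v G₂], extended bilinearly, is well defined and satisfies the right pre-Lie identity. -/
open scoped Classical

noncomputable section

/-- A sink: a vertex that is the source of no edge. -/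
def RootedMultigraph.IsSink (G : RootedMultigraph) (v : G.V) : Prop :=
  ∀ e : G.E, G.src e ≠ v
namespace RootedMultigraph

lemma glue_rootIsSource {A B : RootedMultigraph} (hA : A.RootIsSource)
    (hB : B.RootIsSource) (v : A.V) : (A.glue v B).RootIsSource := by
  rintro (e | e) h
  · exact hA e (Sum.inl.inj h)
  · dsimp [glue] at h
    split_ifs at h with hr
    · exact hB e hr

open Fin.NatCast Fin.CommRing in
lemma glue_acyclic {A B : RootedMultigraph} (hA : A.Acyclic) (hBa : B.Acyclic)
    (hB : B.RootIsSource) (v : A.V) : (A.glue v B).Acyclic := by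
  rintro ⟨n, e, he⟩
  by_cases hall : ∀ i, ∃ a : A.E, e i = Sum.inl a
  · choose a ha using hall
    apply hA
    refine ⟨n, a, fun i => ?_⟩
    have := he i
    rw [ha i, ha (i+1)] at this
    exact Sum.inl.inj this
  · obtain ⟨i₀, hi₀⟩ := not_forall.mp hall
    obtain ⟨b₀, hb₀⟩ : ∃ b, e i₀ = Sum.inr b := by
      rcases he' : e i₀ with a | b
      · exact absurd ⟨a, he'⟩ hi₀
      · exact ⟨b, rfl⟩
    -- once in B, stay in B
    have step : ∀ i : Fin (n+1), (∃ b, e i = Sum.inr b) → ∃ b, e (i+1) = Sum.inr b := by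
      rintro i ⟨b, hb⟩
      have := he i
      rw [hb] at this
      dsimp [glue] at this
      rw [dif_neg (hB b)] at this
      cases h : e (i+1) with
      | inl a => rw [h] at this; cases this
      | inr b' => exact ⟨b', rfl⟩
    have all : ∀ k : ℕ, ∃ b, e (i₀ + k) = Sum.inr b := by
      intro k
      induction k with
      | zero => simp only [Nat.cast_zero, add_zero]; exact ⟨b₀, hb₀⟩
      | succ m ih =>
        have := step (i₀ + m) ih
        convert this using 3
        push_cast
        ring
    have allb : ∀ i, ∃ b, e i = Sum.inr b := by
      intro i
      have := all (i - i₀ : Fin (n+1)).val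
      rwa [Fin.cast_val_eq_self, add_sub_cancel] at this
    choose b hb using allb
    apply hBa
    refine ⟨n, b, fun i => ?_⟩
    have := he i
    rw [hb i, hb (i+1)] at this
    dsimp [glue] at this
    rw [dif_neg (hB (b i))] at this
    split_ifs at this with hr <;> simp at this <;> exact this

lemma glue_good_s16 {A B : RootedMultigraph} (hA : A.Good) (hB : B.Good) (v : A.V) :
    (A.glue v B).Good :=
  ⟨glue_acyclic hA.1 hB.1 hB.2 v, glue_rootIsSource hA.2 hB.2 v⟩

end RootedMultigraph
namespace RootedMultigraph

variable {A A' B B' C : RootedMultigraph}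

lemma isSink_glue_inl {v u : A.V} :
    (A.glue v B).IsSink (Sum.inl u) ↔ A.IsSink u ∧ (u = v → B.IsSink B.root) := by
  constructor
  · intro h
    refine ⟨fun e he => h (Sum.inl e) (congrArg Sum.inl he), ?_⟩
    rintro rfl e he
    exact h (Sum.inr e) (by dsimp [glue]; rw [dif_pos he])
  · rintro ⟨h1, h2⟩ (e | e) he
    · exact h1 e (Sum.inl.inj he)
    · dsimp [glue] at he
      split_ifs at he with hr
      exact h2 (Sum.inl.inj he).symm e hr

lemma isSink_glue_inr {v : A.V} {w : B.V} {hw : w ≠ B.root} :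
    (A.glue v B).IsSink (Sum.inr ⟨w, hw⟩) ↔ B.IsSink w := by
  constructor
  · intro h e he
    subst he
    apply h (Sum.inr e)
    dsimp [glue]
    rw [dif_neg hw]
  · intro h
    rintro (e | e) he
    · cases he
    · dsimp [glue] at he
      split_ifs at he with hr
      exact h e (Subtype.mk_eq_mk.mp (Sum.inr.inj he))

/-- Iso invariance of glue in the first argument. -/
lemma iso_glue_left (eV : A.V ≃ A'.V) (eE : A.E ≃ A'.E)
    (hs : ∀ e, eV (A.src e) = A'.src (eE e)) (ht : ∀ e, eV (A.tgt e) = A'.tgt (eE e))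
    (hr : eV A.root = A'.root) (v : A.V) :
    (A.glue v B).Iso (A'.glue (eV v) B) := by
  refine ⟨Equiv.sumCongr eV (Equiv.refl _), Equiv.sumCongr eE (Equiv.refl _), ?_, ?_, ?_⟩
  · rintro (e | e)
    · exact congrArg Sum.inl (hs e)
    · erw [Equiv.sumCongr_apply, Equiv.sumCongr_apply]
      dsimp [glue]
      split_ifs <;> rfl
  · rintro (e | e)
    · exact congrArg Sum.inl (ht e)
    · erw [Equiv.sumCongr_apply, Equiv.sumCongr_apply]
      dsimp [glue]
      split_ifs <;> rfl
  · exact congrArg Sum.inl hr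

/-- Iso invariance of glue in the second argument. -/
lemma iso_glue_right (eV : B.V ≃ B'.V) (eE : B.E ≃ B'.E)
    (hs : ∀ e, eV (B.src e) = B'.src (eE e)) (ht : ∀ e, eV (B.tgt e) = B'.tgt (eE e))
    (hr : eV B.root = B'.root) (v : A.V) :
    (A.glue v B).Iso (A.glue v B') := by
  have hcond : ∀ w : B.V, w ≠ B.root ↔ eV w ≠ B'.root := by
    intro w
    rw [← hr]
    exact not_congr (Equiv.apply_eq_iff_eq eV).symm
  refine ⟨Equiv.sumCongr (Equiv.refl _) (eV.subtypeEquiv hcond),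
    Equiv.sumCongr (Equiv.refl _) eE, ?_, ?_, rfl⟩
  · rintro (e | e)
    · rfl
    · erw [Equiv.sumCongr_apply, Equiv.sumCongr_apply]
      dsimp [glue]
      have : B'.src (eE e) = B'.root ↔ B.src e = B.root := by
        rw [← hs, ← hr]
        exact Equiv.apply_eq_iff_eq eV
      split_ifs with h1 h2 h2
      · rfl
      · exact absurd (this.mpr h1) h2
      · exact absurd (this.mp h2) h1
      · simp [hs e]
  · rintro (e | e)
    · rfl
    · erw [Equiv.sumCongr_apply, Equiv.sumCongr_apply]
      dsimp [glue]
      have : B'.tgt (eE e) = B'.root ↔ B.tgt e = B.root := by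
        rw [← ht, ← hr]
        exact Equiv.apply_eq_iff_eq eV
      split_ifs with h1 h2 h2
      · rfl
      · exact absurd (this.mpr h1) h2
      · exact absurd (this.mp h2) h1
      · simp [ht e]

end RootedMultigraph
/-- auxiliary equiv for associativity of gluing -/
def assocEquiv {α β γ : Type} (b₀ : β) :
    ((α ⊕ {b : β // b ≠ b₀}) ⊕ γ) ≃ (α ⊕ {y : β ⊕ γ // y ≠ Sum.inl b₀}) where
  toFun x := match x with
    | .inl (.inl a) => .inl a
    | .inl (.inr ⟨b, hb⟩) => .inr ⟨.inl b, fun h => hb (Sum.inl.inj h)⟩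
    | .inr c => .inr ⟨.inr c, fun h => by cases h⟩
  invFun y := match y with
    | .inl a => .inl (.inl a)
    | .inr ⟨.inl b, hb⟩ => .inl (.inr ⟨b, fun h => hb (congrArg Sum.inl h)⟩)
    | .inr ⟨.inr c, _⟩ => .inr c
  left_inv := by rintro ((a | ⟨b, hb⟩) | c) <;> rfl
  right_inv := by rintro (a | ⟨(b | c), h⟩) <;> rfl

/-- auxiliary equiv for commutativity of gluing -/
def commEquiv {α β γ : Type} : ((α ⊕ β) ⊕ γ) ≃ ((α ⊕ γ) ⊕ β) where
  toFun x := match x with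
    | .inl (.inl a) => .inl (.inl a)
    | .inl (.inr b) => .inr b
    | .inr c => .inl (.inr c)
  invFun x := match x with
    | .inl (.inl a) => .inl (.inl a)
    | .inl (.inr c) => .inr c
    | .inr b => .inl (.inr b)
  left_inv := by rintro ((a | b) | c) <;> rfl
  right_inv := by rintro ((a | c) | b) <;> rfl

namespace RootedMultigraph

variable {A B C : RootedMultigraph}

lemma iso_assoc_s16 (v : A.V) (u : B.V) :
    ((A.glue v B).glue (if h : u = B.root then Sum.inl v else Sum.inr ⟨u, h⟩) C).Iso
      (A.glue v (B.glue u C)) := by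
  refine ⟨assocEquiv B.root, Equiv.sumAssoc A.E B.E C.E, ?_, ?_, rfl⟩
  · rintro ((e | e) | e)
    · rfl
    · erw [Equiv.sumAssoc_apply_inl_inr, Equiv.coe_fn_mk]
      dsimp [glue, assocEquiv]
      split_ifs with h1 h2 h2 <;>
        first
          | rfl
          | exact absurd (congrArg Sum.inl h1) h2
          | (refine Eq.trans ?_ (dif_pos h2).symm; rfl)
          | (refine Eq.trans ?_ (dif_neg h2).symm; rfl)
          | exact absurd h2 (fun h => h1 (Sum.inl.inj h))
          | exact absurd (Sum.inl.inj h2) h1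
    · erw [Equiv.sumAssoc_apply_inr, Equiv.coe_fn_mk]
      dsimp [glue, assocEquiv]
      by_cases hc : C.src e = C.root <;> by_cases hu : u = B.root <;>
        simp only [hc, hu, dif_pos, dif_neg, not_false_iff] <;>
        split_ifs <;> simp_all [assocEquiv]
  · rintro ((e | e) | e)
    · rfl
    · erw [Equiv.sumAssoc_apply_inl_inr, Equiv.coe_fn_mk]
      dsimp [glue, assocEquiv]
      split_ifs with h1 h2 h2 <;>
        first
          | rfl
          | exact absurd (congrArg Sum.inl h1) h2
          | (refine Eq.trans ?_ (dif_pos h2).symm; rfl)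
          | (refine Eq.trans ?_ (dif_neg h2).symm; rfl)
          | exact absurd h2 (fun h => h1 (Sum.inl.inj h))
          | exact absurd (Sum.inl.inj h2) h1
    · erw [Equiv.sumAssoc_apply_inr, Equiv.coe_fn_mk]
      dsimp [glue, assocEquiv]
      by_cases hc : C.tgt e = C.root <;> by_cases hu : u = B.root <;>
        simp only [hc, hu, dif_pos, dif_neg, not_false_iff] <;>
        split_ifs <;> simp_all [assocEquiv]

lemma iso_comm (v u : A.V) :
    ((A.glue v B).glue (Sum.inl u) C).Iso ((A.glue u C).glue (Sum.inl v) B) := by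
  refine ⟨commEquiv, commEquiv, ?_, ?_, rfl⟩
  · rintro ((e | e) | e)
    · rfl
    · erw [Equiv.coe_fn_mk, Equiv.coe_fn_mk]
      dsimp [glue, commEquiv]
      split_ifs <;> rfl
    · erw [Equiv.coe_fn_mk, Equiv.coe_fn_mk]
      dsimp [glue, commEquiv]
      split_ifs <;> rfl
  · rintro ((e | e) | e)
    · rfl
    · erw [Equiv.coe_fn_mk, Equiv.coe_fn_mk]
      dsimp [glue, commEquiv]
      split_ifs <;> rfl
    · erw [Equiv.coe_fn_mk, Equiv.coe_fn_mk]
      dsimp [glue, commEquiv]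
      split_ifs <;> rfl

end RootedMultigraph
namespace RootedMultigraph

/-- Sinks of a glued graph: sinks of `A` other than `v`, plus sinks of `B`. -/
def sinkEquiv (A B : RootedMultigraph) (v : A.V) (hv : A.IsSink v) :
    {w : (A.glue v B).V // (A.glue v B).IsSink w} ≃
      ({u : {u : A.V // A.IsSink u} // u.1 ≠ v} ⊕ {b : B.V // B.IsSink b}) where
  toFun w := match w with
    | ⟨.inl u, h⟩ =>
        if he : u = v then .inr ⟨B.root, (isSink_glue_inl.mp h).2 he⟩
        else .inl ⟨⟨u, (isSink_glue_inl.mp h).1⟩, he⟩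
    | ⟨.inr ⟨b, hb⟩, h⟩ => .inr ⟨b, isSink_glue_inr.mp h⟩
  invFun x := match x with
    | .inl ⟨⟨u, hu⟩, hne⟩ => ⟨.inl u, isSink_glue_inl.mpr ⟨hu, fun h => absurd h hne⟩⟩
    | .inr ⟨b, hb⟩ =>
        if hbr : b = B.root then ⟨.inl v, isSink_glue_inl.mpr ⟨hv, fun _ => hbr ▸ hb⟩⟩
        else ⟨.inr ⟨b, hbr⟩, isSink_glue_inr.mpr hb⟩
  left_inv := by
    rintro ⟨(u | ⟨b, hb⟩), h⟩
    · by_cases he : u = v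
      · subst he
        simp
      · simp [he]
    · simp [hb]
  right_inv := by
    rintro (⟨⟨u, hu⟩, hne⟩ | ⟨b, hb⟩)
    · simp [hne]
    · by_cases hbr : b = B.root
      · subst hbr
        simp
      · simp [hbr]

/-- A graph isomorphism maps sinks to sinks. -/
lemma iso_isSink {A A' : RootedMultigraph} (eV : A.V ≃ A'.V) (eE : A.E ≃ A'.E)
    (hs : ∀ e, eV (A.src e) = A'.src (eE e)) {u : A.V} (hu : A.IsSink u) :
    A'.IsSink (eV u) := by
  intro e' he'
  apply hu (eE.symm e')
  apply eV.injective
  rw [hs (eE.symm e'), Equiv.apply_symm_apply, he']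

end RootedMultigraph

open RootedMultigraph

/-- glued DAG -/
def dagGlue (G₁ : RootedDAG) (v : G₁.1.V) (G₂ : RootedDAG) : RootedDAG :=
  ⟨G₁.1.glue v G₂.1, glue_good_s16 G₁.2 G₂.2 v⟩

variable (R : Type) [CommRing R]

def delta (G : RootedDAG) : DAGClass →₀ R := Finsupp.single (Quot.mk dagIsoRel G) 1

lemma delta_congr {G G' : RootedDAG} (h : G.1.Iso G'.1) : delta R G = delta R G' := by
  unfold delta
  rw [Quot.sound (r := dagIsoRel) h]

def g0 (G₁ G₂ : RootedDAG) : DAGClass →₀ R :=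
  ∑ v : {v : G₁.1.V // G₁.1.IsSink v}, delta R (dagGlue G₁ v.1 G₂)

lemma g0_left {G₁ G₁' : RootedDAG} (h : G₁.1.Iso G₁'.1) (G₂ : RootedDAG) :
    g0 R G₁ G₂ = g0 R G₁' G₂ := by
  obtain ⟨eV, eE, hs, ht, hr⟩ := h
  have hs' : ∀ e, eV.symm (G₁'.1.src e) = G₁.1.src (eE.symm e) := by
    intro e
    apply eV.injective
    rw [Equiv.apply_symm_apply, hs, Equiv.apply_symm_apply]
  refine Fintype.sum_equiv
    (eV.subtypeEquiv fun u => ⟨fun hu => iso_isSink eV eE hs hu,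
      fun hu => by
        have := iso_isSink eV.symm eE.symm hs' hu
        rwa [Equiv.symm_apply_apply] at this⟩)
    _ _ fun u => ?_
  exact delta_congr R (iso_glue_left eV eE hs ht hr u.1)

lemma g0_right (G₁ : RootedDAG) {G₂ G₂' : RootedDAG} (h : G₂.1.Iso G₂'.1) :
    g0 R G₁ G₂ = g0 R G₁ G₂' := by
  obtain ⟨eV, eE, hs, ht, hr⟩ := h
  exact Finset.sum_congr rfl fun v _ =>
    delta_congr R (iso_glue_right eV eE hs ht hr v.1)

def gclass : DAGClass → DAGClass → (DAGClass →₀ R) :=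
  Quot.lift (fun G₁ => Quot.lift (g0 R G₁) (fun _ _ h => g0_right R G₁ h))
    (fun G₁ G₁' h => by
      funext x
      induction x using Quot.ind with
      | mk G₂ => exact g0_left R h G₂)

def insOp : (DAGClass →₀ R) →ₗ[R] (DAGClass →₀ R) →ₗ[R] (DAGClass →₀ R) :=
  Finsupp.lsum R fun a => LinearMap.toSpanSingleton R _
    (Finsupp.lsum R fun b => LinearMap.toSpanSingleton R _ (gclass R a b))

lemma insOp_single (a b : DAGClass) :
    insOp R (Finsupp.single a 1) (Finsupp.single b 1) = gclass R a b := by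
  simp [insOp, Finsupp.lsum_single, LinearMap.toSpanSingleton_apply]

lemma insOp_delta (G₁ G₂ : RootedDAG) :
    insOp R (delta R G₁) (delta R G₂) = g0 R G₁ G₂ :=
  insOp_single R _ _
lemma split (A B C : RootedDAG) (v : {v : A.1.V // A.1.IsSink v}) :
    g0 R (dagGlue A v.1 B) C
      = (∑ u : {u : A.1.V // A.1.IsSink u},
            if u.1 ≠ v.1 then delta R (dagGlue (dagGlue A v.1 B) (Sum.inl u.1) C) else 0)
        + ∑ u : {u : B.1.V // B.1.IsSink u}, delta R (dagGlue A v.1 (dagGlue B u.1 C)) := by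
  have h1 := (Equiv.sum_comp (sinkEquiv A.1 B.1 v.1 v.2).symm
    (fun w : {w : (dagGlue A v.1 B).1.V // (dagGlue A v.1 B).1.IsSink w} =>
      delta R (dagGlue (dagGlue A v.1 B) w.1 C))).symm
  rw [g0]
  refine h1.trans ?_
  rw [Fintype.sum_sum_type]
  congr 1
  · -- inl part
    have step : ∀ x : {u : {u : A.1.V // A.1.IsSink u} // u.1 ≠ v.1},
        delta R (dagGlue (dagGlue A v.1 B)
          ((sinkEquiv A.1 B.1 v.1 v.2).symm (Sum.inl x)).1 C)
        = delta R (dagGlue (dagGlue A v.1 B) (Sum.inl x.1.1) C) := by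
      rintro ⟨⟨u, hu⟩, hne⟩
      rfl
    rw [Finset.sum_congr rfl fun x _ => step x]
    rw [← Finset.sum_filter]
    exact (Finset.sum_subtype _ (by simp)
      (fun u : {u : A.1.V // A.1.IsSink u} =>
        delta R (dagGlue (dagGlue A v.1 B) (Sum.inl u.1) C))).symm
  · -- inr part
    refine Finset.sum_congr rfl fun b _ => ?_
    obtain ⟨b, hb⟩ := b
    have hval : ((sinkEquiv A.1 B.1 v.1 v.2).symm (Sum.inr ⟨b, hb⟩)).1
        = (if h : b = B.1.root then Sum.inl v.1 else Sum.inr ⟨b, h⟩) := by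
      by_cases hbr : b = B.1.root <;> simp [sinkEquiv, hbr] <;> rfl
    rw [hval]
    exact delta_congr R (RootedMultigraph.iso_assoc_s16 v.1 b)

lemma expand1 (A B C : RootedDAG) :
    insOp R (insOp R (delta R A) (delta R B)) (delta R C)
      = ∑ v : {v : A.1.V // A.1.IsSink v}, g0 R (dagGlue A v.1 B) C := by
  rw [insOp_delta, g0, map_sum, LinearMap.sum_apply]
  exact Finset.sum_congr rfl fun v _ => insOp_delta R _ C

lemma expand2 (A B C : RootedDAG) :
    insOp R (delta R A) (insOp R (delta R B) (delta R C))
      = ∑ u : {u : B.1.V // B.1.IsSink u}, g0 R A (dagGlue B u.1 C) := by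
  rw [insOp_delta R B C, g0, map_sum]
  exact Finset.sum_congr rfl fun u _ => insOp_delta R A _

lemma keyDelta (A B C : RootedDAG) :
    insOp R (insOp R (delta R A) (delta R B)) (delta R C)
      - insOp R (delta R A) (insOp R (delta R B) (delta R C))
    = insOp R (insOp R (delta R A) (delta R C)) (delta R B)
      - insOp R (delta R A) (insOp R (delta R C) (delta R B)) := by
  rw [expand1, expand2, expand1, expand2]
  have main : ∀ B C : RootedDAG,
      (∑ v : {v : A.1.V // A.1.IsSink v}, g0 R (dagGlue A v.1 B) C)
        - ∑ u : {u : B.1.V // B.1.IsSink u}, g0 R A (dagGlue B u.1 C)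
      = ∑ v : {v : A.1.V // A.1.IsSink v}, ∑ u : {u : A.1.V // A.1.IsSink u},
          if u.1 ≠ v.1 then delta R (dagGlue (dagGlue A v.1 B) (Sum.inl u.1) C) else 0 := by
    intro B C
    have e1 : (∑ v : {v : A.1.V // A.1.IsSink v}, g0 R (dagGlue A v.1 B) C)
        = (∑ v : {v : A.1.V // A.1.IsSink v}, ∑ u : {u : A.1.V // A.1.IsSink u},
            if u.1 ≠ v.1 then delta R (dagGlue (dagGlue A v.1 B) (Sum.inl u.1) C) else 0)
          + ∑ v : {v : A.1.V // A.1.IsSink v}, ∑ u : {u : B.1.V // B.1.IsSink u},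
              delta R (dagGlue A v.1 (dagGlue B u.1 C)) := by
      rw [← Finset.sum_add_distrib]
      exact Finset.sum_congr rfl fun v _ => split R A B C v
    have e2 : (∑ u : {u : B.1.V // B.1.IsSink u}, g0 R A (dagGlue B u.1 C))
        = ∑ v : {v : A.1.V // A.1.IsSink v}, ∑ u : {u : B.1.V // B.1.IsSink u},
            delta R (dagGlue A v.1 (dagGlue B u.1 C)) := by
      rw [Finset.sum_comm]
      exact Finset.sum_congr rfl fun u _ => by rw [g0]
    rw [e1, e2]
    abel
  rw [main B C, main C B]
  have comm : ∀ (v u : {v : A.1.V // A.1.IsSink v}),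
      delta R (dagGlue (dagGlue A v.1 B) (Sum.inl u.1) C)
        = delta R (dagGlue (dagGlue A u.1 C) (Sum.inl v.1) B) :=
    fun v u => delta_congr R (RootedMultigraph.iso_comm v.1 u.1)
  calc ∑ v : {v : A.1.V // A.1.IsSink v}, ∑ u : {u : A.1.V // A.1.IsSink u},
          (if u.1 ≠ v.1 then delta R (dagGlue (dagGlue A v.1 B) (Sum.inl u.1) C) else 0)
      = ∑ v : {v : A.1.V // A.1.IsSink v}, ∑ u : {u : A.1.V // A.1.IsSink u},
          (if u.1 ≠ v.1 then delta R (dagGlue (dagGlue A u.1 C) (Sum.inl v.1) B) else 0) := by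
        exact Finset.sum_congr rfl fun v _ => Finset.sum_congr rfl fun u _ => by rw [comm]
    _ = ∑ u : {u : A.1.V // A.1.IsSink u}, ∑ v : {v : A.1.V // A.1.IsSink v},
          (if u.1 ≠ v.1 then delta R (dagGlue (dagGlue A u.1 C) (Sum.inl v.1) B) else 0) :=
        Finset.sum_comm
    _ = ∑ v : {v : A.1.V // A.1.IsSink v}, ∑ u : {u : A.1.V // A.1.IsSink u},
          (if u.1 ≠ v.1 then delta R (dagGlue (dagGlue A v.1 C) (Sum.inl u.1) B) else 0) := by
        refine Finset.sum_congr rfl fun u _ => Finset.sum_congr rfl fun w _ => ?_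
        exact if_congr ⟨Ne.symm, Ne.symm⟩ rfl rfl
lemma keyQuot (a b c : DAGClass) :
    insOp R (insOp R (Finsupp.single a 1) (Finsupp.single b 1)) (Finsupp.single c 1)
      - insOp R (Finsupp.single a 1) (insOp R (Finsupp.single b 1) (Finsupp.single c 1))
    = insOp R (insOp R (Finsupp.single a 1) (Finsupp.single c 1)) (Finsupp.single b 1)
      - insOp R (Finsupp.single a 1) (insOp R (Finsupp.single c 1) (Finsupp.single b 1)) := by
  induction a using Quot.ind with | mk A => ?_
  induction b using Quot.ind with | mk B => ?_
  induction c using Quot.ind with | mk C => ?_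
  exact keyDelta R A B C

lemma key_single (a b c : DAGClass) (r s q : R) :
    insOp R (insOp R (Finsupp.single a r) (Finsupp.single b s)) (Finsupp.single c q)
      - insOp R (Finsupp.single a r) (insOp R (Finsupp.single b s) (Finsupp.single c q))
    = insOp R (insOp R (Finsupp.single a r) (Finsupp.single c q)) (Finsupp.single b s)
      - insOp R (Finsupp.single a r) (insOp R (Finsupp.single c q) (Finsupp.single b s)) := by
  have hone : ∀ (a : DAGClass) (r : R), Finsupp.single a r = r • Finsupp.single a (1 : R) := by
    intro a r
    rw [Finsupp.smul_single', mul_one]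
  rw [hone a r, hone b s, hone c q]
  simp only [map_smul, LinearMap.smul_apply]
  rw [smul_comm q s, smul_comm q s]
  simp only [← smul_sub]
  rw [keyQuot R a b c]

/-- the insertion operator summing only over the sink vertices of `G₁`,
`G₁ ⊲ G₂ = Σ_{v a sink of G₁} [G₁ ⊲_v G₂]`, is well defined on the free `R`-module
spanned by isomorphism classes of finite rooted directed acyclic multigraphs with
source root, and satisfies the right pre-Lie identity. -/
theorem insertion_at_sinks_is_preLie (R : Type) [CommRing R] :
    ∃ ins : (DAGClass →₀ R) →ₗ[R] (DAGClass →₀ R) →ₗ[R] (DAGClass →₀ R),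
      (∀ G₁ G₂ : RootedDAG,
        ∃ h : ∀ v : {v : G₁.1.V // G₁.1.IsSink v}, (G₁.1.glue v.1 G₂.1).Good,
          ins (Finsupp.single (Quot.mk dagIsoRel G₁) 1)
              (Finsupp.single (Quot.mk dagIsoRel G₂) 1)
            = ∑ v : {v : G₁.1.V // G₁.1.IsSink v},
                Finsupp.single
                  (Quot.mk dagIsoRel (⟨G₁.1.glue v.1 G₂.1, h v⟩ : RootedDAG)) (1 : R)) ∧
      IsPreLie ins := by
  refine ⟨insOp R, fun G₁ G₂ => ⟨fun v => glue_good_s16 G₁.2 G₂.2 v.1, ?_⟩, ?_⟩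
  · exact insOp_delta R G₁ G₂
  · intro x y z
    induction x using Finsupp.induction_linear with
    | zero => simp
    | add f g hf hg =>
        simp only [map_add, LinearMap.add_apply]
        rw [add_sub_add_comm, add_sub_add_comm, hf, hg]
    | single a r =>
      induction y using Finsupp.induction_linear with
      | zero => simp
      | add f g hf hg =>
          simp only [map_add, LinearMap.add_apply]
          rw [add_sub_add_comm, add_sub_add_comm, hf, hg]
      | single b s =>
        induction z using Finsupp.induction_linear with
        | zero => simp
        | add f g hf hg =>
            simp only [map_add, LinearMap.add_apply]
            rw [add_sub_add_comm, add_sub_add_comm, hf, hg]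
        | single c q => exact key_single R a b c r s q
end
end
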